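/- arXiv:1707.09000 — 3 statements merged into one kernel-verified Lean document; each statement's English description precedes it below -/
import Mathlib

section
/- Let f : ℝ → ℝ be continuous, bounded and integrable. Then the function g(x) := (K∗f)(x) = ∫_ℝ ½ e^{−|x−y|} f(y) dy is twice continuously differentiable on ℝ and satisfies g(x) − g''(x) = f(x) for every x ∈ ℝ; equivalently, K∗ inverts the Helmholtz operator 1 − ∂ₓ², and ∂ₓ²(K∗f) = K∗f − f. -/
open MeasureTheory Real Set Filter Topology

/-- Convolution with the Green's function `K(x-y) = ½ e^{-|x-y|}` of the
Helmholtz operator `1 - ∂ₓ²`. -/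
noncomputable def Kconv (f : ℝ → ℝ) : ℝ → ℝ :=
  fun x => ∫ y : ℝ, (1 / 2) * Real.exp (-|x - y|) * f y

private lemma my_integral_Ici_sub_Ici {f : ℝ → ℝ} {a b : ℝ}
    (ha : IntegrableOn f (Ici a)) (hb : IntegrableOn f (Ici b)) :
    (∫ x in Ici a, f x) - ∫ x in Ici b, f x = ∫ x in a..b, f x := by
  wlog hab : a ≤ b generalizing a b
  · rw [intervalIntegral.integral_symm, ← this hb ha (le_of_not_ge hab), neg_sub]
  rw [sub_eq_iff_eq_add, intervalIntegral.integral_of_le hab,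
    integral_Ioc_eq_integral_Ioo, ← integral_Ico_eq_integral_Ioo,
    ← setIntegral_union ((Iio_disjoint_Ici le_rfl).mono_left Ico_subset_Iio_self)
      measurableSet_Ici (ha.mono_set Ico_subset_Ici_self) hb,
    Ico_union_Ici_eq_Ici hab]

/-- If `f` is continuous, bounded and integrable, then `g := K∗f` is twice
continuously differentiable and satisfies `g - g'' = f`, i.e. `K∗` inverts the
Helmholtz operator `1 - ∂ₓ²` and `∂ₓ²(K∗f) = K∗f - f`. -/
theorem helmholtz_green_inverse (f : ℝ → ℝ)
    (hf_cont : Continuous f)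
    (hf_bdd : ∃ C, ∀ x, |f x| ≤ C)
    (hf_int : Integrable f) :
    ContDiff ℝ 2 (Kconv f) ∧
      ∀ x : ℝ, Kconv f x - deriv (deriv (Kconv f)) x = f x := by
  obtain ⟨C, hC⟩ := hf_bdd
  have hC0 : 0 ≤ C := (abs_nonneg _).trans (hC 0)
  have hcontA : Continuous fun y : ℝ => exp y * f y := continuous_exp.mul hf_cont
  have hcontB : Continuous fun y : ℝ => exp (-y) * f y :=
    (continuous_exp.comp continuous_neg).mul hf_cont
  -- integrability of the exponential-weighted integrands
  have hFA : ∀ x : ℝ, IntegrableOn (fun y => exp y * f y) (Iic x) := by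
    intro x
    refine Integrable.mono ((integrableOn_exp_Iic x).const_mul C)
      hcontA.aestronglyMeasurable.restrict ?_
    filter_upwards with y
    simp only [norm_mul, Real.norm_eq_abs, abs_exp, abs_of_nonneg hC0]
    calc exp y * |f y| ≤ exp y * C := by
          exact mul_le_mul_of_nonneg_left (hC y) (exp_pos y).le
      _ = C * exp y := mul_comm _ _
  have hFB : ∀ x : ℝ, IntegrableOn (fun y => exp (-y) * f y) (Ici x) := by
    intro x
    have hexp : IntegrableOn (fun y : ℝ => exp (-y)) (Ici x) := by
      rw [integrableOn_Ici_iff_integrableOn_Ioi]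
      simpa using exp_neg_integrableOn_Ioi x one_pos
    refine Integrable.mono (hexp.const_mul C) hcontB.aestronglyMeasurable.restrict ?_
    filter_upwards with y
    simp only [norm_mul, Real.norm_eq_abs, abs_exp, abs_of_nonneg hC0]
    calc exp (-y) * |f y| ≤ exp (-y) * C := by
          exact mul_le_mul_of_nonneg_left (hC y) (exp_pos _).le
      _ = C * exp (-y) := mul_comm _ _
  -- integrability of the convolution integrand
  have hK_int : ∀ x : ℝ, Integrable fun y => (1 / 2) * exp (-|x - y|) * f y := by
    intro x
    have hKcont : Continuous fun y => (1 / 2) * exp (-|x - y|) * f y :=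
      (continuous_const.mul ((continuous_const.sub continuous_id).abs.neg.rexp)).mul hf_cont
    refine Integrable.mono (hf_int.const_mul (1 / 2)) hKcont.aestronglyMeasurable ?_
    filter_upwards with y
    simp only [norm_mul, Real.norm_eq_abs, abs_exp]
    have h1 : exp (-|x - y|) ≤ 1 := exp_le_one_iff.mpr (neg_nonpos.mpr (abs_nonneg _))
    have h2 : (0:ℝ) ≤ |f y| := abs_nonneg _
    have h3 : (0:ℝ) < exp (-|x - y|) := exp_pos _
    rw [abs_of_nonneg (by norm_num : (0:ℝ) ≤ (1:ℝ)/2)]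
    nlinarith
  set A : ℝ → ℝ := fun x => ∫ y in Iic x, exp y * f y with hA
  set B : ℝ → ℝ := fun x => ∫ y in Ici x, exp (-y) * f y with hB
  -- the key representation of the convolution
  have hg_eq : ∀ x : ℝ, Kconv f x = (1 / 2) * exp (-x) * A x + (1 / 2) * exp x * B x := by
    intro x
    have hsplit : Kconv f x =
        (∫ y in Iic x, (1 / 2) * exp (-|x - y|) * f y) +
        ∫ y in Ioi x, (1 / 2) * exp (-|x - y|) * f y := by
      rw [Kconv, ← intervalIntegral.integral_Iic_add_Ioi (hK_int x).integrableOn (hK_int x).integrableOn]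
    have hleft : (∫ y in Iic x, (1 / 2) * exp (-|x - y|) * f y)
        = (1 / 2) * exp (-x) * A x := by
      rw [hA]
      rw [show (1 / 2) * exp (-x) * ∫ y in Iic x, exp y * f y
          = ∫ y in Iic x, (1 / 2) * exp (-x) * (exp y * f y) from
        (integral_const_mul _ _).symm]
      refine setIntegral_congr_fun measurableSet_Iic fun y hy => ?_
      have : |x - y| = x - y := abs_of_nonneg (sub_nonneg.mpr hy)
      rw [this, show -(x - y) = -x + y by ring, exp_add]
      ring
    have hright : (∫ y in Ioi x, (1 / 2) * exp (-|x - y|) * f y)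
        = (1 / 2) * exp x * B x := by
      rw [hB, ← integral_Ici_eq_integral_Ioi]
      rw [show (1 / 2) * exp x * ∫ y in Ici x, exp (-y) * f y
          = ∫ y in Ici x, (1 / 2) * exp x * (exp (-y) * f y) from
        (integral_const_mul _ _).symm]
      rw [integral_Ici_eq_integral_Ioi, integral_Ici_eq_integral_Ioi]
      refine setIntegral_congr_fun measurableSet_Ioi fun y hy => ?_
      have : |x - y| = y - x := by
        rw [abs_sub_comm]; exact abs_of_nonneg (sub_nonneg.mpr (le_of_lt hy))
      rw [this, show -(y - x) = x + -y by ring, exp_add]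
      ring
    rw [hsplit, hleft, hright]
  -- derivatives of A and B
  have hA' : ∀ x : ℝ, HasDerivAt A (exp x * f x) x := by
    intro x
    have key : A = fun u => A 0 + ∫ t in (0:ℝ)..u, exp t * f t := by
      funext u
      rw [← intervalIntegral.integral_Iic_sub_Iic (hFA 0) (hFA u)]
      ring
    rw [key]
    exact (intervalIntegral.integral_hasDerivAt_right
      (hcontA.intervalIntegrable 0 x)
      (hcontA.stronglyMeasurable.stronglyMeasurableAtFilter)
      hcontA.continuousAt).const_add (A 0)
  have hB' : ∀ x : ℝ, HasDerivAt B (-(exp (-x) * f x)) x := by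
    intro x
    have key : B = fun u => B 0 - ∫ t in (0:ℝ)..u, exp (-t) * f t := by
      funext u
      have := my_integral_Ici_sub_Ici (hFB u) (hFB 0)
      rw [intervalIntegral.integral_symm] at this
      rw [hB]
      simp only at this ⊢
      linarith
    rw [key]
    exact (intervalIntegral.integral_hasDerivAt_right
      (hcontB.intervalIntegrable 0 x)
      (hcontB.stronglyMeasurable.stronglyMeasurableAtFilter)
      hcontB.continuousAt).const_sub (B 0)
  -- first derivative
  set g1 : ℝ → ℝ := fun x => -((1 / 2) * exp (-x) * A x) + (1 / 2) * exp x * B x with hg1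
  have hexp_neg' : ∀ x : ℝ, HasDerivAt (fun u : ℝ => (1 / 2) * exp (-u))
      (-((1 / 2) * exp (-x))) x := by
    intro x
    have := (((hasDerivAt_id x).neg).exp).const_mul (1 / 2 : ℝ)
    convert this using 1
    case e'_4 => rfl
    case e'_5 => rfl
    case e'_8 => rfl
    simp [mul_comm]
  have hexp' : ∀ x : ℝ, HasDerivAt (fun u : ℝ => (1 / 2) * exp u)
      ((1 / 2) * exp x) x := fun x => (Real.hasDerivAt_exp x).const_mul (1 / 2 : ℝ)
  have hg' : ∀ x : ℝ, HasDerivAt (Kconv f) (g1 x) x := by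
    intro x
    have h1 := (hexp_neg' x).mul (hA' x)
    have h2 := (hexp' x).mul (hB' x)
    have hsum := h1.add h2
    have heq : Kconv f = fun x => (1 / 2) * exp (-x) * A x + (1 / 2) * exp x * B x :=
      funext hg_eq
    rw [heq]
    convert hsum using 1
    case e'_4 => rfl
    case e'_5 => rfl
    case e'_8 => rfl
    rw [hg1]
    simp only [Real.exp_neg]
    field_simp
    ring
  have hg1' : ∀ x : ℝ, HasDerivAt g1 (Kconv f x - f x) x := by
    intro x
    have h1 := ((hexp_neg' x).mul (hA' x)).neg
    have h2 := (hexp' x).mul (hB' x)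
    have hsum := h1.add h2
    convert hsum using 1
    case e'_4 => rfl
    case e'_5 => rfl
    case e'_8 => rfl
    rw [hg_eq x]
    simp only [Real.exp_neg]
    field_simp
    ring
  have hderiv : deriv (Kconv f) = g1 := funext fun x => (hg' x).deriv
  have hderiv2 : ∀ x : ℝ, deriv (deriv (Kconv f)) x = Kconv f x - f x := by
    intro x
    rw [hderiv]
    exact (hg1' x).deriv
  have hdiff : Differentiable ℝ (Kconv f) := fun x => (hg' x).differentiableAt
  have hdiff1 : Differentiable ℝ g1 := fun x => (hg1' x).differentiableAt
  refine ⟨?_, fun x => by rw [hderiv2 x]; ring⟩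
  rw [show (2 : WithTop ℕ∞) = 1 + 1 from rfl, contDiff_succ_iff_deriv]
  refine ⟨hdiff, by simp, ?_⟩
  rw [hderiv, contDiff_one_iff_deriv]
  refine ⟨hdiff1, ?_⟩
  rw [show deriv g1 = fun x => Kconv f x - f x from funext fun x => (hg1' x).deriv]
  exact hdiff.continuous.sub hf_cont
end

section
/- Let c ∈ ℝ and define the single peakon u(x,t) := c e^{−|x − c t|}. Then for every t ∈ ℝ and every x ≠ c t, u is differentiable in x and t at (x,t) and satisfies the advective form of the Camassa–Holm equation u_t(x,t) + u(x,t) u_x(x,t) = −∂ₓ(K∗(u(·,t)² + ½ u_x(·,t)²))(x), where u_x(·,t) denotes the (almost-everywhere defined) spatial derivative y ↦ −c·sgn(y − c t) e^{−|y − c t|}. -/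
open MeasureTheory Real Set Filter Topology

lemma integrableOn_exp_lin_Ioi (k b a : ℝ) (hb : 0 < b) :
    IntegrableOn (fun y => Real.exp (k - b * y)) (Ioi a) := by
  have h := (exp_neg_integrableOn_Ioi a hb).const_mul (Real.exp k)
  refine IntegrableOn.congr_fun h (fun y _ => ?_) measurableSet_Ioi
  rw [← Real.exp_add]; ring_nf

lemma integral_exp_lin_Ioi (k b a : ℝ) (hb : 0 < b) :
    ∫ y in Ioi a, Real.exp (k - b * y) = Real.exp (k - b * a) / b := by
  have hd : ∀ y ∈ Ici a, HasDerivAt (fun y => -(Real.exp (k - b * y) / b))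
      (Real.exp (k - b * y)) y := by
    intro y _
    have h : HasDerivAt (fun y : ℝ => k - b * y) (-b) y := by
      simpa using ((hasDerivAt_id y).const_mul b).const_sub k
    have h2 := ((h.exp).div_const b).neg
    convert h2 using 1
    all_goals first | rfl | field_simp
  have h1 : Tendsto (fun y : ℝ => k - b * y) atTop atBot := by
    have : Tendsto (fun y : ℝ => b * y) atTop atTop :=
      Tendsto.const_mul_atTop hb tendsto_id
    simpa [sub_eq_add_neg] using tendsto_atBot_add_const_left atTop k (tendsto_neg_atTop_atBot.comp this)
  have hT : Tendsto (fun y : ℝ => -(Real.exp (k - b * y) / b)) atTop (𝓝 0) := by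
    have := ((Real.tendsto_exp_atBot.comp h1).div_const b).neg
    simpa using this
  have := integral_Ioi_of_hasDerivAt_of_tendsto' hd (integrableOn_exp_lin_Ioi k b a hb) hT
  rw [this]; ring

lemma integral_exp_lin_Iic (k b a : ℝ) (hb : 0 < b) :
    ∫ y in Iic a, Real.exp (k + b * y) = Real.exp (k + b * a) / b := by
  have h := integral_comp_neg_Iic a (fun y => Real.exp (k - b * y))
  rw [integral_exp_lin_Ioi k b (-a) hb] at h
  simpa [mul_neg, sub_neg_eq_add] using h

lemma integrableOn_exp_lin_Iic (k b a : ℝ) (hb : 0 < b) :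
    IntegrableOn (fun y => Real.exp (k + b * y)) (Iic a) := by
  have m : MeasurableEmbedding fun x : ℝ => -x :=
    (Homeomorph.neg ℝ).measurableEmbedding
  have h : IntegrableOn (fun y => Real.exp (k - b * y)) (Ici (-a)) :=
    Iff.mpr integrableOn_Ici_iff_integrableOn_Ioi (integrableOn_exp_lin_Ioi k b (-a) hb)
  rw [← Measure.map_neg_eq_self (volume : Measure ℝ), m.integrableOn_map_iff]
  have hp : (fun x : ℝ => -x) ⁻¹' Iic a = Ici (-a) := by
    ext y; simp [neg_le]
  rw [hp]
  refine IntegrableOn.congr_fun h (fun y _ => ?_) measurableSet_Ici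
  simp only [Function.comp]; ring_nf

lemma J_nonneg (s : ℝ) (hs : 0 ≤ s) :
    ∫ y : ℝ, Real.exp (-(|s - y| + 2 * |y|))
      = 4 / 3 * Real.exp (-s) - 2 / 3 * Real.exp (-(2 * s)) := by
  set g := fun y : ℝ => Real.exp (-(|s - y| + 2 * |y|)) with hg
  have eq1 : EqOn g (fun y => Real.exp (-s + 3 * y)) (Iic 0) := by
    intro y hy
    simp only [hg]
    rw [abs_of_nonpos (mem_Iic.mp hy), abs_of_nonneg (by linarith [mem_Iic.mp hy] : (0:ℝ) ≤ s - y)]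
    ring_nf
  have eq2 : EqOn g (fun y => Real.exp (-s - y)) (Ioc 0 s) := by
    intro y hy
    simp only [hg]
    rw [abs_of_nonneg (le_of_lt hy.1), abs_of_nonneg (by linarith [hy.2] : (0:ℝ) ≤ s - y)]
    ring_nf
  have eq3 : EqOn g (fun y => Real.exp (s - 3 * y)) (Ioi s) := by
    intro y hy
    simp only [hg]
    rw [abs_of_nonneg (by linarith [hs, mem_Ioi.mp hy] : (0:ℝ) ≤ y),
      abs_of_nonpos (by linarith [mem_Ioi.mp hy] : s - y ≤ 0)]
    ring_nf
  have hIic : IntegrableOn g (Iic 0) :=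
    (IntegrableOn.congr_fun (integrableOn_exp_lin_Iic (-s) 3 0 (by norm_num))
      (fun y hy => (eq1 hy).symm) measurableSet_Iic)
  have hcont : Continuous g := by fun_prop
  have hIoc : IntegrableOn g (Ioc 0 s) := hcont.integrableOn_Ioc
  have hIoiS : IntegrableOn g (Ioi s) :=
    (IntegrableOn.congr_fun (integrableOn_exp_lin_Ioi s 3 s (by norm_num))
      (fun y hy => (eq3 hy).symm) measurableSet_Ioi)
  have hIoi0 : IntegrableOn g (Ioi 0) := by
    rw [← Ioc_union_Ioi_eq_Ioi hs]; exact hIoc.union hIoiS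
  have split1 : ∫ y, g y = (∫ y in Iic 0, g y) + ∫ y in Ioi 0, g y :=
    (intervalIntegral.integral_Iic_add_Ioi hIic hIoi0).symm
  have split2 : ∫ y in Ioi 0, g y = (∫ y in Ioc 0 s, g y) + ∫ y in Ioi s, g y := by
    rw [← Ioc_union_Ioi_eq_Ioi hs]
    exact setIntegral_union (Ioc_disjoint_Ioi le_rfl) measurableSet_Ioi hIoc hIoiS
  have e1 : ∫ y in Iic 0, g y = Real.exp (-s) / 3 := by
    rw [setIntegral_congr_fun measurableSet_Iic eq1]
    simpa using integral_exp_lin_Iic (-s) 3 0 (by norm_num)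
  have e2 : ∫ y in Ioc 0 s, g y = Real.exp (-s) - Real.exp (-(2 * s)) := by
    rw [setIntegral_congr_fun measurableSet_Ioc eq2, ← intervalIntegral.integral_of_le hs]
    have : ∀ y : ℝ, Real.exp (-s - y) = Real.exp (-(y + s)) := fun y => by ring_nf
    simp_rw [this]
    rw [intervalIntegral.integral_comp_add_right (fun y => Real.exp (-y)) s,
      intervalIntegral.integral_comp_neg (fun y => Real.exp y), integral_exp]
    ring_nf
  have e3 : ∫ y in Ioi s, g y = Real.exp (-(2 * s)) / 3 := by
    rw [setIntegral_congr_fun measurableSet_Ioi eq3, integral_exp_lin_Ioi s 3 s (by norm_num)]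
    congr 2; ring
  rw [split1, split2, e1, e2, e3]; ring

lemma J_eq (s : ℝ) :
    ∫ y : ℝ, Real.exp (-(|s - y| + 2 * |y|))
      = 4 / 3 * Real.exp (-|s|) - 2 / 3 * Real.exp (-(2 * |s|)) := by
  rcases le_or_gt 0 s with hs | hs
  · rw [abs_of_nonneg hs]; exact J_nonneg s hs
  · rw [abs_of_neg hs, ← J_nonneg (-s) (by linarith),
      ← integral_neg_eq_self (fun y : ℝ => Real.exp (-(|-s - y| + 2 * |y|)))]
    congr 1; funext y
    rw [show (-s - -y) = -(s - y) by ring, abs_neg, abs_neg]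

lemma Kconv_peakon (c a : ℝ) :
    Kconv (fun y => (c * Real.exp (-|y - a|)) ^ 2
        + 1 / 2 * (-c * Real.sign (y - a) * Real.exp (-|y - a|)) ^ 2)
      = fun x => c ^ 2 * Real.exp (-|x - a|) - 1 / 2 * c ^ 2 * Real.exp (-(2 * |x - a|)) := by
  funext x
  unfold Kconv
  have hae : (fun y => (1 / 2) * Real.exp (-|x - y|) *
        ((c * Real.exp (-|y - a|)) ^ 2
          + 1 / 2 * (-c * Real.sign (y - a) * Real.exp (-|y - a|)) ^ 2))
      =ᵐ[volume] fun y => 3 / 4 * c ^ 2 * Real.exp (-(|x - y| + 2 * |y - a|)) := by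
    filter_upwards [compl_mem_ae_iff.mpr (volume_singleton (a := a))] with y hy
    have hy' : y ≠ a := hy
    have hsgn : Real.sign (y - a) ^ 2 = 1 := by
      rcases (sub_ne_zero.mpr hy').lt_or_gt with h | h
      · rw [Real.sign_of_neg h]; norm_num
      · rw [Real.sign_of_pos h]; norm_num
    have hE : Real.exp (-(|x - y| + 2 * |y - a|))
        = Real.exp (-|x - y|) * Real.exp (-|y - a|) ^ 2 := by
      rw [show (-(|x - y| + 2 * |y - a|)) = -|x - y| + (-|y - a| + -|y - a|) by ring,
        Real.exp_add, Real.exp_add]; ring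
    rw [hE]
    have hq : (-c * Real.sign (y - a) * Real.exp (-|y - a|)) ^ 2
        = c ^ 2 * Real.exp (-|y - a|) ^ 2 := by
      rw [mul_pow, mul_pow, hsgn]; ring
    rw [hq]; ring
  rw [integral_congr_ae hae, MeasureTheory.integral_const_mul]
  have hshift : ∫ y : ℝ, Real.exp (-(|x - y| + 2 * |y - a|))
      = ∫ y : ℝ, Real.exp (-(|(x - a) - y| + 2 * |y|)) := by
    rw [← integral_add_right_eq_self (fun y => Real.exp (-(|x - y| + 2 * |y - a|))) a]
    congr 1; funext y
    rw [show x - (y + a) = (x - a) - y by ring, show y + a - a = y by ring]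
  rw [hshift, J_eq (x - a)]
  ring

/-- The single peakon `u(x,t) = c e^{-|x - ct|}` satisfies the advective form of
the Camassa–Holm equation `u_t + u u_x = -∂ₓ(K∗(u² + ½ u_x²))` away from the
peak, where the (a.e. defined) spatial derivative is
`u_x(y,t) = -c sgn(y - ct) e^{-|y - ct|}`. -/
theorem peakon_solves_camassaHolm (c : ℝ) :
    let u : ℝ → ℝ → ℝ := fun x t => c * Real.exp (-|x - c * t|)
    let ux : ℝ → ℝ → ℝ := fun y t => -c * Real.sign (y - c * t) * Real.exp (-|y - c * t|)
    ∀ t x : ℝ, x ≠ c * t →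
      DifferentiableAt ℝ (fun x' => u x' t) x ∧
      DifferentiableAt ℝ (fun t' => u x t') t ∧
      deriv (fun t' => u x t') t + u x t * ux x t
        = - deriv (Kconv (fun y => (u y t) ^ 2 + (1 / 2) * (ux y t) ^ 2)) x := by
  intro u ux t x hx
  have hK : Kconv (fun y => (u y t) ^ 2 + (1 / 2) * (ux y t) ^ 2)
      = fun x' => c ^ 2 * Real.exp (-|x' - c * t|)
          - 1 / 2 * c ^ 2 * Real.exp (-(2 * |x' - c * t|)) := Kconv_peakon c (c * t)
  rcases hx.lt_or_gt with hxa | hxa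
  · -- x < c * t
    have hev : ∀ᶠ x' in 𝓝 x, x' < c * t := eventually_lt_nhds hxa
    have hdx : HasDerivAt (fun x' => u x' t) (c * Real.exp (x - c * t)) x := by
      have hd : HasDerivAt (fun x' : ℝ => c * Real.exp (x' - c * t))
          (c * Real.exp (x - c * t)) x := by
        simpa using (((hasDerivAt_id x).sub_const (c * t)).exp.const_mul c)
      refine hd.congr_of_eventuallyEq ?_
      filter_upwards [hev] with x' h
      simp only [u, abs_of_neg (sub_neg.mpr h), neg_neg]
    have hct : ∀ᶠ t' in 𝓝 t, x < c * t' := by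
      have hc1 : ContinuousAt (fun t' : ℝ => c * t') t := by fun_prop
      exact continuousAt_const.eventually_lt hc1 hxa
    have hdt : HasDerivAt (fun t' => u x t') (c * (Real.exp (x - c * t) * -c)) t := by
      have hd : HasDerivAt (fun t' : ℝ => c * Real.exp (x - c * t'))
          (c * (Real.exp (x - c * t) * -c)) t := by
        have hin : HasDerivAt (fun t' : ℝ => x - c * t') (-c) t := by
          simpa using ((hasDerivAt_id t).const_mul c).const_sub x
        exact hin.exp.const_mul c
      refine hd.congr_of_eventuallyEq ?_
      filter_upwards [hct] with t' h
      simp only [u, abs_of_neg (by linarith : x - c * t' < 0), neg_neg]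
    have hdK : HasDerivAt (fun x' => c ^ 2 * Real.exp (-|x' - c * t|)
          - 1 / 2 * c ^ 2 * Real.exp (-(2 * |x' - c * t|)))
        (c ^ 2 * Real.exp (x - c * t) - 1 / 2 * c ^ 2 * (Real.exp (2 * x - 2 * (c * t)) * 2)) x := by
      have h1 : HasDerivAt (fun x' : ℝ => c ^ 2 * Real.exp (x' - c * t))
          (c ^ 2 * Real.exp (x - c * t)) x := by
        simpa using (((hasDerivAt_id x).sub_const (c * t)).exp.const_mul (c ^ 2))
      have h2 : HasDerivAt (fun x' : ℝ => 1 / 2 * c ^ 2 * Real.exp (2 * x' - 2 * (c * t)))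
          (1 / 2 * c ^ 2 * (Real.exp (2 * x - 2 * (c * t)) * 2)) x := by
        have hin : HasDerivAt (fun x' : ℝ => 2 * x' - 2 * (c * t)) (2 : ℝ) x := by
          simpa using ((hasDerivAt_id x).const_mul 2).sub_const (2 * (c * t))
        exact hin.exp.const_mul (1 / 2 * c ^ 2)
      refine (h1.sub h2).congr_of_eventuallyEq ?_
      filter_upwards [hev] with x' h
      rw [abs_of_neg (sub_neg.mpr h)]
      congr 2 <;> ring
    refine ⟨hdx.differentiableAt, hdt.differentiableAt, ?_⟩
    rw [hK, hdt.deriv, hdK.deriv]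
    have hEE : Real.exp (2 * x - 2 * (c * t)) = Real.exp (x - c * t) * Real.exp (x - c * t) := by
      rw [← Real.exp_add]; ring_nf
    simp only [u, ux, Real.sign_of_neg (sub_neg.mpr hxa), abs_of_neg (sub_neg.mpr hxa), neg_neg]
    rw [hEE]; ring
  · -- c * t < x
    have hev : ∀ᶠ x' in 𝓝 x, c * t < x' := eventually_gt_nhds hxa
    have hdx : HasDerivAt (fun x' => u x' t) (c * (Real.exp (c * t - x) * -1)) x := by
      have hd : HasDerivAt (fun x' : ℝ => c * Real.exp (c * t - x'))
          (c * (Real.exp (c * t - x) * -1)) x := by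
        have hin : HasDerivAt (fun x' : ℝ => c * t - x') (-1 : ℝ) x := by
          simpa using (hasDerivAt_id x).const_sub (c * t)
        exact hin.exp.const_mul c
      refine hd.congr_of_eventuallyEq ?_
      filter_upwards [hev] with x' h
      simp only [u, abs_of_pos (sub_pos.mpr h), neg_sub]
    have hct : ∀ᶠ t' in 𝓝 t, c * t' < x := by
      have hc1 : ContinuousAt (fun t' : ℝ => c * t') t := by fun_prop
      exact hc1.eventually_lt continuousAt_const hxa
    have hdt : HasDerivAt (fun t' => u x t') (c * (Real.exp (c * t - x) * c)) t := by
      have hd : HasDerivAt (fun t' : ℝ => c * Real.exp (c * t' - x))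
          (c * (Real.exp (c * t - x) * c)) t := by
        have hin : HasDerivAt (fun t' : ℝ => c * t' - x) c t := by
          simpa using ((hasDerivAt_id t).const_mul c).sub_const x
        exact hin.exp.const_mul c
      refine hd.congr_of_eventuallyEq ?_
      filter_upwards [hct] with t' h
      simp only [u, abs_of_pos (by linarith : 0 < x - c * t'), neg_sub]
    have hdK : HasDerivAt (fun x' => c ^ 2 * Real.exp (-|x' - c * t|)
          - 1 / 2 * c ^ 2 * Real.exp (-(2 * |x' - c * t|)))
        (c ^ 2 * (Real.exp (c * t - x) * -1)
          - 1 / 2 * c ^ 2 * (Real.exp (2 * (c * t) - 2 * x) * -2)) x := by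
      have h1 : HasDerivAt (fun x' : ℝ => c ^ 2 * Real.exp (c * t - x'))
          (c ^ 2 * (Real.exp (c * t - x) * -1)) x := by
        have hin : HasDerivAt (fun x' : ℝ => c * t - x') (-1 : ℝ) x := by
          simpa using (hasDerivAt_id x).const_sub (c * t)
        exact hin.exp.const_mul (c ^ 2)
      have h2 : HasDerivAt (fun x' : ℝ => 1 / 2 * c ^ 2 * Real.exp (2 * (c * t) - 2 * x'))
          (1 / 2 * c ^ 2 * (Real.exp (2 * (c * t) - 2 * x) * -2)) x := by
        have hin : HasDerivAt (fun x' : ℝ => 2 * (c * t) - 2 * x') (-2 : ℝ) x := by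
          simpa using ((hasDerivAt_id x).const_mul 2).const_sub (2 * (c * t))
        exact hin.exp.const_mul (1 / 2 * c ^ 2)
      refine (h1.sub h2).congr_of_eventuallyEq ?_
      filter_upwards [hev] with x' h
      rw [abs_of_pos (sub_pos.mpr h)]
      congr 2 <;> ring
    refine ⟨hdx.differentiableAt, hdt.differentiableAt, ?_⟩
    rw [hK, hdt.deriv, hdK.deriv]
    have hEE : Real.exp (2 * (c * t) - 2 * x)
        = Real.exp (c * t - x) * Real.exp (c * t - x) := by
      rw [← Real.exp_add]; ring_nf
    simp only [u, ux, Real.sign_of_pos (sub_pos.mpr hxa), abs_of_pos (sub_pos.mpr hxa), neg_sub]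
    rw [hEE]; ring
end

section
/- Let M ≥ 1, T > 0, and let q_a, p_a : [0,T) → ℝ (a = 1,…,M) be C¹ functions such that the positions q_a(t) are pairwise distinct for every t, and such that they satisfy the canonical peakon Hamiltonian equations q̇_a(t) = ½ Σ_{b=1}^{M} p_b(t) e^{−|q_a(t) − q_b(t)|} and ṗ_a(t) = ½ p_a(t) Σ_{b=1}^{M} p_b(t) sgn(q_a(t) − q_b(t)) e^{−|q_a(t) − q_b(t)|} (with the convention sgn(0) = 0). Then the peakon wave train u(x,t) := ½ Σ_{a=1}^{M} p_a(t) e^{−|x − q_a(t)|} satisfies the advective form of the Camassa–Holm equation u_t + u u_x = −∂ₓ(K∗(u² + ½ u_x²)) at every (x,t) with x ∉ {q_1(t),…,q_M(t)}, where u_x(·,t) denotes the almost-everywhere defined spatial derivative. -/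
open MeasureTheory Real Set Filter Topology

namespace PeakonAux

/-- `|z| = Real.sign z * z` for all real `z`. -/
lemma abs_eq_sign_mul (z : ℝ) : |z| = Real.sign z * z := by
  rcases lt_trichotomy z 0 with h | h | h
  · rw [Real.sign_of_neg h, abs_of_neg h]; ring
  · simp [h]
  · rw [Real.sign_of_pos h, abs_of_pos h]; ring

lemma sign_sq_eq_one {z : ℝ} (h : z ≠ 0) : Real.sign z ^ 2 = 1 := by
  rcases Real.sign_apply_eq_of_ne_zero z h with h1 | h1 <;> rw [h1] <;> ring

lemma measurable_sign : Measurable (Real.sign : ℝ → ℝ) := by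
  unfold Real.sign
  exact Measurable.ite (measurableSet_lt measurable_id measurable_const) measurable_const
    (Measurable.ite (measurableSet_lt measurable_const measurable_id) measurable_const
      measurable_const)

variable {M : ℕ} (qs ps : Fin M → ℝ)

/-- Peakon profile. -/
noncomputable def U (y : ℝ) : ℝ := (1 / 2) * ∑ a, ps a * Real.exp (-|y - qs a|)

/-- A.e. spatial derivative of the peakon profile. -/
noncomputable def UX (y : ℝ) : ℝ :=
  -(1 / 2) * ∑ a, ps a * Real.sign (y - qs a) * Real.exp (-|y - qs a|)

/-- `UX²` with the diagonal `sign²` replaced by `1` (average-valued version). -/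
noncomputable def Wf (y : ℝ) : ℝ :=
  (UX qs ps y) ^ 2
    + (1 / 4) * ∑ a, (ps a) ^ 2 * (1 - (Real.sign (y - qs a)) ^ 2)
        * Real.exp (-(2 * |y - qs a|))

/-- Jump of the antiderivative at the peak `qs a`. -/
noncomputable def Dl (η : ℝ) (a : Fin M) : ℝ :=
  -(ps a) * Real.exp (η * qs a) * (U qs ps (qs a) - η * UX qs ps (qs a))

/-- Continuous antiderivative of `e^{ηy}(U² + ½UX²)`. -/
noncomputable def Phi (η : ℝ) (y : ℝ) : ℝ :=
  Real.exp (η * y) * (U qs ps y * UX qs ps y - (η / 2) * Wf qs ps y)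
    - ∑ a, ((Real.sign (y - qs a) + η) / 2) * Dl qs ps η a

/-- Smooth local model for `U` with frozen signs `ε`. -/
noncomputable def Ue (ε : Fin M → ℝ) (y : ℝ) : ℝ :=
  (1 / 2) * ∑ a, ps a * Real.exp (-(ε a * (y - qs a)))

noncomputable def UXe (ε : Fin M → ℝ) (y : ℝ) : ℝ :=
  -(1 / 2) * ∑ a, ps a * ε a * Real.exp (-(ε a * (y - qs a)))

/-- Smooth local model for `Phi` with frozen signs `ε`. -/
noncomputable def Fe (ε : Fin M → ℝ) (η : ℝ) (y : ℝ) : ℝ :=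
  Real.exp (η * y) * (Ue qs ps ε y * UXe qs ps ε y - (η / 2) * (UXe qs ps ε y) ^ 2)
    - ∑ a, ((ε a + η) / 2) * Dl qs ps η a

lemma exp_frozen {ε : Fin M → ℝ} {z : ℝ}
    (hmatch : ∀ b, z ≠ qs b → ε b = Real.sign (z - qs b)) (b : Fin M) :
    Real.exp (-(ε b * (z - qs b))) = Real.exp (-|z - qs b|) := by
  by_cases h : z = qs b
  · simp [h]
  · rw [hmatch b h, ← abs_eq_sign_mul]

lemma Ue_eq {ε : Fin M → ℝ} {z : ℝ}
    (hmatch : ∀ b, z ≠ qs b → ε b = Real.sign (z - qs b)) :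
    Ue qs ps ε z = U qs ps z := by
  unfold Ue U
  congr 1
  exact Finset.sum_congr rfl fun b _ => by rw [exp_frozen qs (hmatch := hmatch)]


lemma Phi_eq_Fe (hdist : ∀ a b : Fin M, a ≠ b → qs a ≠ qs b) {η : ℝ} {ε : Fin M → ℝ}
    (hε : ∀ b, ε b = 1 ∨ ε b = -1) {z : ℝ}
    (hmatch : ∀ b, z ≠ qs b → ε b = Real.sign (z - qs b)) :
    Phi qs ps η z = Fe qs ps ε η z := by
  have hUe := Ue_eq qs ps hmatch
  by_cases hc : ∀ b, z ≠ qs b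
  · -- no peak coincidence: all terms match
    have hUXe : UXe qs ps ε z = UX qs ps z := by
      unfold UXe UX
      congr 1
      exact Finset.sum_congr rfl fun b _ => by
        rw [exp_frozen qs (hmatch := hmatch), hmatch b (hc b)]
    have hW : Wf qs ps z = (UX qs ps z) ^ 2 := by
      unfold Wf
      have : ∀ b ∈ Finset.univ, (ps b) ^ 2 * (1 - (Real.sign (z - qs b)) ^ 2)
          * Real.exp (-(2 * |z - qs b|)) = 0 := fun b _ => by
        rw [sign_sq_eq_one (sub_ne_zero.mpr (hc b))]; ring
      rw [Finset.sum_congr rfl this]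
      simp
    have hcorr : ∀ b ∈ Finset.univ, ((Real.sign (z - qs b) + η) / 2) * Dl qs ps η b
        = ((ε b + η) / 2) * Dl qs ps η b := fun b _ => by
      rw [hmatch b (hc b)]
    unfold Phi Fe
    rw [hUe, hUXe, hW, Finset.sum_congr rfl hcorr]
  · -- z is a peak: z = qs c for a unique c
    push_neg at hc
    obtain ⟨c, hzc⟩ := hc
    have hne : ∀ b, b ≠ c → z ≠ qs b := fun b hb h => by
      exact hdist b c hb (h ▸ hzc ▸ rfl)
    have hsc : Real.sign (z - qs c) = 0 := by rw [hzc, sub_self, Real.sign_zero]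
    have hec : Real.exp (-|z - qs c|) = 1 := by rw [hzc, sub_self, abs_zero, neg_zero, Real.exp_zero]
    have hεc2 : ε c ^ 2 = 1 := by rcases hε c with h | h <;> rw [h] <;> ring
    -- UXe z = UX z - ½ pᶜ εᶜ
    have hUXe : UXe qs ps ε z = UX qs ps z - (1 / 2) * ps c * ε c := by
      unfold UXe UX
      rw [← Finset.sum_erase_add _ _ (Finset.mem_univ c),
        ← Finset.sum_erase_add _ (fun b => ps b * Real.sign (z - qs b) * Real.exp (-|z - qs b|))
          (Finset.mem_univ c)]
      rw [Finset.sum_congr rfl (fun b hb => by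
        rw [exp_frozen qs (hmatch := hmatch), hmatch b (hne b (Finset.ne_of_mem_erase hb))])]
      rw [hsc, hec]
      have : Real.exp (-(ε c * (z - qs c))) = 1 := by rw [hzc, sub_self, mul_zero, neg_zero, Real.exp_zero]
      rw [this]
      ring
    -- Wf z = (UX z)² + ¼ pᶜ²
    have hW : Wf qs ps z = (UX qs ps z) ^ 2 + (1 / 4) * (ps c) ^ 2 := by
      unfold Wf
      rw [← Finset.sum_erase_add _ _ (Finset.mem_univ c)]
      rw [Finset.sum_congr rfl (fun b hb => by
        rw [sign_sq_eq_one (sub_ne_zero.mpr (hne b (Finset.ne_of_mem_erase hb)))]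
        ring : ∀ b ∈ Finset.univ.erase c, (ps b) ^ 2 * (1 - (Real.sign (z - qs b)) ^ 2)
          * Real.exp (-(2 * |z - qs b|)) = 0)]
      have : Real.exp (-(2 * |z - qs c|)) = 1 := by
        rw [hzc, sub_self, abs_zero, mul_zero, neg_zero, Real.exp_zero]
      rw [hsc, this, Finset.sum_const_zero]
      ring
    -- correction sums differ by (εᶜ/2)·Dlᶜ
    have hcorr : ∑ b, ((ε b + η) / 2) * Dl qs ps η b
        = (∑ b, ((Real.sign (z - qs b) + η) / 2) * Dl qs ps η b) + (ε c / 2) * Dl qs ps η c := by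
      rw [← Finset.sum_erase_add _ _ (Finset.mem_univ c),
        ← Finset.sum_erase_add _ (fun b => ((Real.sign (z - qs b) + η) / 2) * Dl qs ps η b)
          (Finset.mem_univ c)]
      rw [Finset.sum_congr rfl (fun b hb => by
        rw [hmatch b (hne b (Finset.ne_of_mem_erase hb))])]
      rw [hsc]
      ring
    have hDlc : Dl qs ps η c
        = -(ps c) * Real.exp (η * z) * (U qs ps z - η * UX qs ps z) := by
      unfold Dl; rw [hzc]
    unfold Phi Fe
    rw [hUe, hUXe, hW, hcorr, hDlc]
    linear_combination (Real.exp (η * z) * η * (ps c) ^ 2 / 8) * hεc2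


lemma hasDerivAt_term (a : Fin M) (c : ℝ) (y : ℝ) :
    HasDerivAt (fun y => Real.exp (-(c * (y - qs a)))) (-c * Real.exp (-(c * (y - qs a)))) y := by
  have h1 : HasDerivAt (fun y : ℝ => -(c * (y - qs a))) (-c) y := by
    simpa using (((hasDerivAt_id y).sub_const (qs a)).const_mul c).fun_neg
  simpa [mul_comm] using h1.exp

lemma hasDerivAt_Ue (ε : Fin M → ℝ) (y : ℝ) :
    HasDerivAt (Ue qs ps ε) (UXe qs ps ε y) y := by
  have h : ∀ a ∈ Finset.univ, HasDerivAt (fun y => ps a * Real.exp (-(ε a * (y - qs a))))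
      (ps a * (-(ε a) * Real.exp (-(ε a * (y - qs a))))) y :=
    fun a _ => (hasDerivAt_term qs a (ε a) y).const_mul (ps a)
  have h3 := (HasDerivAt.fun_sum h).const_mul ((1 : ℝ) / 2)
  have he : UXe qs ps ε y
      = (1 : ℝ) / 2 * ∑ a, ps a * (-(ε a) * Real.exp (-(ε a * (y - qs a)))) := by
    unfold UXe
    rw [Finset.mul_sum, Finset.mul_sum]
    exact Finset.sum_congr rfl fun a _ => by ring
  rw [he]
  exact h3

lemma hasDerivAt_UXe {ε : Fin M → ℝ} (hε : ∀ b, ε b ^ 2 = 1) (y : ℝ) :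
    HasDerivAt (UXe qs ps ε) (Ue qs ps ε y) y := by
  have h : ∀ a ∈ Finset.univ, HasDerivAt (fun y => ps a * ε a * Real.exp (-(ε a * (y - qs a))))
      (ps a * ε a * (-(ε a) * Real.exp (-(ε a * (y - qs a))))) y :=
    fun a _ => (hasDerivAt_term qs a (ε a) y).const_mul (ps a * ε a)
  have h3 := (HasDerivAt.fun_sum h).const_mul ((-(1 / 2) : ℝ))
  have he : Ue qs ps ε y
      = (-(1 / 2) : ℝ) * ∑ a, ps a * ε a * (-(ε a) * Real.exp (-(ε a * (y - qs a)))) := by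
    unfold Ue
    rw [Finset.mul_sum, Finset.mul_sum]
    refine Finset.sum_congr rfl fun a _ => ?_
    have h2 := hε a
    linear_combination (-(1 : ℝ) / 2 * Real.exp (-(ε a * (y - qs a))) * ps a) * h2
  rw [he]
  exact h3

lemma hasDerivAt_Fe {η : ℝ} (hη : η ^ 2 = 1) {ε : Fin M → ℝ} (hε : ∀ b, ε b ^ 2 = 1) (y : ℝ) :
    HasDerivAt (Fe qs ps ε η)
      (Real.exp (η * y) * ((Ue qs ps ε y) ^ 2 + (1 / 2) * (UXe qs ps ε y) ^ 2)) y := by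
  have hU := hasDerivAt_Ue qs ps ε y
  have hUX := hasDerivAt_UXe qs ps hε y
  have hexp : HasDerivAt (fun y : ℝ => Real.exp (η * y)) (η * Real.exp (η * y)) y := by
    simpa [mul_comm] using ((hasDerivAt_id y).const_mul η).exp
  have hmain : HasDerivAt
      (fun y => Ue qs ps ε y * UXe qs ps ε y - (η / 2) * (UXe qs ps ε y) ^ 2)
      (UXe qs ps ε y * UXe qs ps ε y + Ue qs ps ε y * Ue qs ps ε y
        - (η / 2) * (2 * UXe qs ps ε y * Ue qs ps ε y)) y := by
    have h1 := hU.fun_mul hUX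
    have h2 := ((hUX.fun_pow 2).const_mul (η / 2))
    refine (h1.fun_sub h2).congr_deriv ?_
    ring
  have := hexp.fun_mul hmain
  have hfinal := this.sub_const (∑ a, ((ε a + η) / 2) * Dl qs ps η a)
  refine hfinal.congr_deriv ?_
  linear_combination (-(Real.exp (η * y) * (UXe qs ps ε y) ^ 2 / 2)) * hη


/-- The function `u² + ½ uₓ²` to be convolved. -/
noncomputable def fC (y : ℝ) : ℝ := (U qs ps y) ^ 2 + (1 / 2) * (UX qs ps y) ^ 2

/-- Right-continuous version of `UX`. -/
noncomputable def UXr (y : ℝ) : ℝ :=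
  -(1 / 2) * ∑ a, ps a * (if y < qs a then (-1 : ℝ) else 1) * Real.exp (-|y - qs a|)

/-- Right-derivative of `Phi η`. -/
noncomputable def RH (η : ℝ) (y : ℝ) : ℝ :=
  Real.exp (η * y) * ((U qs ps y) ^ 2 + (1 / 2) * (UXr qs ps y) ^ 2)

/-- Frozen right signs at `y`. -/
noncomputable def epsR (y : ℝ) : Fin M → ℝ := fun b => if y < qs b then (-1 : ℝ) else 1

noncomputable def epsL (y : ℝ) : Fin M → ℝ := fun b => if qs b < y then (1 : ℝ) else -1

lemma epsR_pm (y : ℝ) : ∀ b, epsR qs y b = 1 ∨ epsR qs y b = -1 := fun b => by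
  unfold epsR; split <;> simp

lemma epsL_pm (y : ℝ) : ∀ b, epsL qs y b = 1 ∨ epsL qs y b = -1 := fun b => by
  unfold epsL; split <;> simp

lemma epsR_sq (y : ℝ) : ∀ b, epsR qs y b ^ 2 = 1 := fun b => by
  rcases epsR_pm qs y b with h | h <;> rw [h] <;> ring

lemma epsL_sq (y : ℝ) : ∀ b, epsL qs y b ^ 2 = 1 := fun b => by
  rcases epsL_pm qs y b with h | h <;> rw [h] <;> ring

/-- On a right neighbourhood of `y`, `Phi` agrees with the frozen model `Fe (epsR y)`. -/
lemma Phi_eventuallyEq_right (hdist : ∀ a b : Fin M, a ≠ b → qs a ≠ qs b) (η : ℝ) (y : ℝ) :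
    ∀ᶠ z in 𝓝[≥] y, Phi qs ps η z = Fe qs ps (epsR qs y) η z := by
  have h1 : ∀ᶠ z in 𝓝 y, ∀ b, y < qs b → z < qs b := by
    rw [eventually_all]
    intro b
    by_cases hb : y < qs b
    · filter_upwards [Iio_mem_nhds hb] with z hz
      exact fun _ => hz
    · filter_upwards with z hz
      exact absurd hz hb
  filter_upwards [nhdsWithin_le_nhds h1, self_mem_nhdsWithin] with z hz (hzy : y ≤ z)
  refine Phi_eq_Fe qs ps hdist (epsR_pm qs y) (fun b hzb => ?_)
  unfold epsR
  by_cases hb : y < qs b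
  · rw [if_pos hb, Real.sign_of_neg (sub_neg.mpr (hz b hb))]
  · push_neg at hb
    have : qs b < z := lt_of_le_of_ne (hb.trans hzy) (Ne.symm hzb)
    rw [if_neg (not_lt.mpr hb), Real.sign_of_pos (sub_pos.mpr this)]

lemma Phi_eventuallyEq_left (hdist : ∀ a b : Fin M, a ≠ b → qs a ≠ qs b) (η : ℝ) (y : ℝ) :
    ∀ᶠ z in 𝓝[≤] y, Phi qs ps η z = Fe qs ps (epsL qs y) η z := by
  have h1 : ∀ᶠ z in 𝓝 y, ∀ b, qs b < y → qs b < z := by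
    rw [eventually_all]
    intro b
    by_cases hb : qs b < y
    · filter_upwards [Ioi_mem_nhds hb] with z hz
      exact fun _ => hz
    · filter_upwards with z hz
      exact absurd hz hb
  filter_upwards [nhdsWithin_le_nhds h1, self_mem_nhdsWithin] with z hz (hzy : z ≤ y)
  refine Phi_eq_Fe qs ps hdist (epsL_pm qs y) (fun b hzb => ?_)
  unfold epsL
  by_cases hb : qs b < y
  · rw [if_pos hb, Real.sign_of_pos (sub_pos.mpr (hz b hb))]
  · push_neg at hb
    have : z < qs b := lt_of_le_of_ne (hzy.trans hb) hzb
    rw [if_neg (not_lt.mpr hb), Real.sign_of_neg (sub_neg.mpr this)]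

lemma Phi_eq_right (hdist : ∀ a b : Fin M, a ≠ b → qs a ≠ qs b) (η : ℝ) (y : ℝ) :
    Phi qs ps η y = Fe qs ps (epsR qs y) η y := by
  refine Phi_eq_Fe qs ps hdist (epsR_pm qs y) (fun b hzb => ?_)
  unfold epsR
  by_cases hb : y < qs b
  · rw [if_pos hb, Real.sign_of_neg (sub_neg.mpr hb)]
  · push_neg at hb
    rw [if_neg (not_lt.mpr hb), Real.sign_of_pos (sub_pos.mpr (lt_of_le_of_ne hb (Ne.symm hzb)))]

lemma Phi_eq_left (hdist : ∀ a b : Fin M, a ≠ b → qs a ≠ qs b) (η : ℝ) (y : ℝ) :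
    Phi qs ps η y = Fe qs ps (epsL qs y) η y := by
  refine Phi_eq_Fe qs ps hdist (epsL_pm qs y) (fun b hzb => ?_)
  unfold epsL
  by_cases hb : qs b < y
  · rw [if_pos hb, Real.sign_of_pos (sub_pos.mpr hb)]
  · push_neg at hb
    rw [if_neg (not_lt.mpr hb), Real.sign_of_neg (sub_neg.mpr (lt_of_le_of_ne hb hzb))]

lemma continuousAt_Phi (hdist : ∀ a b : Fin M, a ≠ b → qs a ≠ qs b) {η : ℝ} (hη : η ^ 2 = 1)
    (y : ℝ) : ContinuousAt (Phi qs ps η) y := by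
  rw [continuousAt_iff_continuous_left_right]
  constructor
  · exact ((hasDerivAt_Fe qs ps hη (epsL_sq qs y) y).continuousAt.continuousWithinAt).congr_of_eventuallyEq
      (Phi_eventuallyEq_left qs ps hdist η y) (Phi_eq_left qs ps hdist η y)
  · exact ((hasDerivAt_Fe qs ps hη (epsR_sq qs y) y).continuousAt.continuousWithinAt).congr_of_eventuallyEq
      (Phi_eventuallyEq_right qs ps hdist η y) (Phi_eq_right qs ps hdist η y)

lemma Ue_epsR_eq (y : ℝ) : Ue qs ps (epsR qs y) y = U qs ps y := by
  unfold Ue U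
  congr 1
  refine Finset.sum_congr rfl fun b _ => ?_
  congr 2
  unfold epsR
  by_cases hb : y < qs b
  · rw [if_pos hb, abs_of_neg (sub_neg.mpr hb)]; ring
  · push_neg at hb
    rw [if_neg (not_lt.mpr hb), abs_of_nonneg (sub_nonneg.mpr hb)]; ring

lemma UXe_epsR_eq (y : ℝ) : UXe qs ps (epsR qs y) y = UXr qs ps y := by
  unfold UXe UXr
  congr 1
  refine Finset.sum_congr rfl fun b _ => ?_
  have he : Real.exp (-(epsR qs y b * (y - qs b))) = Real.exp (-|y - qs b|) := by
    congr 1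
    unfold epsR
    by_cases hb : y < qs b
    · rw [if_pos hb, abs_of_neg (sub_neg.mpr hb)]; ring
    · push_neg at hb
      rw [if_neg (not_lt.mpr hb), abs_of_nonneg (sub_nonneg.mpr hb)]; ring
  rw [he]
  rfl

/-- `Phi η` has right-derivative `RH η` everywhere. -/
lemma hasDerivWithinAt_Phi (hdist : ∀ a b : Fin M, a ≠ b → qs a ≠ qs b) {η : ℝ} (hη : η ^ 2 = 1)
    (y : ℝ) : HasDerivWithinAt (Phi qs ps η) (RH qs ps η y) (Ioi y) y := by
  have h := (hasDerivAt_Fe qs ps hη (epsR_sq qs y) y).hasDerivWithinAt (s := Ioi y)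
  have heq : RH qs ps η y
      = Real.exp (η * y) * ((Ue qs ps (epsR qs y) y) ^ 2 + (1 / 2) * (UXe qs ps (epsR qs y) y) ^ 2) := by
    unfold RH
    rw [Ue_epsR_eq, UXe_epsR_eq]
  rw [heq]
  refine h.congr_of_eventuallyEq ?_ (Phi_eq_right qs ps hdist η y)
  exact nhdsWithin_mono y Ioi_subset_Ici_self (Phi_eventuallyEq_right qs ps hdist η y)


/-- Uniform bound for `U`, `UX`, `UXr`. -/
noncomputable def Bc : ℝ := (1 / 2) * ∑ a, |ps a|

lemma exp_neg_abs_le_one (z : ℝ) : Real.exp (-|z|) ≤ 1 := by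
  rw [← Real.exp_zero]
  exact Real.exp_le_exp.mpr (neg_nonpos.mpr (abs_nonneg z))

lemma abs_sign_le_one (z : ℝ) : |Real.sign z| ≤ 1 := by
  rcases Real.sign_apply_eq z with h | h | h <;> rw [h] <;> norm_num

lemma Bc_nonneg : 0 ≤ Bc ps := by
  unfold Bc
  positivity

lemma abs_term_le {c : ℝ} (hc : |c| ≤ 1) (a : Fin M) (y : ℝ) :
    |ps a * c * Real.exp (-|y - qs a|)| ≤ |ps a| := by
  rw [abs_mul, abs_mul, Real.abs_exp]
  calc |ps a| * |c| * Real.exp (-|y - qs a|)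
      ≤ |ps a| * 1 * 1 := by
        apply mul_le_mul (mul_le_mul le_rfl hc (abs_nonneg c) (abs_nonneg _))
          (exp_neg_abs_le_one _) (Real.exp_nonneg _) (by positivity)
    _ = |ps a| := by ring

lemma abs_U_le (y : ℝ) : |U qs ps y| ≤ Bc ps := by
  unfold U Bc
  rw [abs_mul]
  have h1 : |(1 : ℝ) / 2| = 1 / 2 := by norm_num
  rw [h1]
  apply mul_le_mul_of_nonneg_left _ (by norm_num : (0:ℝ) ≤ 1/2)
  refine (Finset.abs_sum_le_sum_abs _ _).trans (Finset.sum_le_sum fun a _ => ?_)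
  have := abs_term_le qs ps (c := 1) (by norm_num) a y
  simpa using this

lemma neg_half_sum_bound (g : Fin M → ℝ) (h : ∀ a, |g a| ≤ |ps a|) :
    |(-(1 / 2) : ℝ) * ∑ a, g a| ≤ Bc ps := by
  unfold Bc
  rw [abs_mul, show |(-(1 / 2) : ℝ)| = 1/2 by norm_num]
  exact mul_le_mul_of_nonneg_left
    ((Finset.abs_sum_le_sum_abs _ _).trans (Finset.sum_le_sum fun a _ => h a))
    (by norm_num : (0:ℝ) ≤ 1/2)

lemma abs_UX_le (y : ℝ) : |UX qs ps y| ≤ Bc ps := by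
  unfold UX
  exact neg_half_sum_bound ps _ fun a => abs_term_le qs ps (abs_sign_le_one _) a y

lemma abs_UXr_le (y : ℝ) : |UXr qs ps y| ≤ Bc ps := by
  unfold UXr
  refine neg_half_sum_bound ps _ fun a => abs_term_le qs ps ?_ a y
  split <;> norm_num

lemma fC_nonneg (y : ℝ) : 0 ≤ fC qs ps y := by
  unfold fC
  positivity

lemma fC_le (y : ℝ) : fC qs ps y ≤ (3 / 2) * Bc ps ^ 2 := by
  unfold fC
  have h1 : (U qs ps y) ^ 2 ≤ Bc ps ^ 2 := by
    rw [← sq_abs]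
    exact pow_le_pow_left₀ (abs_nonneg _) (abs_U_le qs ps y) 2
  have h2 : (UX qs ps y) ^ 2 ≤ Bc ps ^ 2 := by
    rw [← sq_abs]
    exact pow_le_pow_left₀ (abs_nonneg _) (abs_UX_le qs ps y) 2
  nlinarith

lemma abs_RH_le {η : ℝ} (y : ℝ) : |RH qs ps η y| ≤ (3 / 2) * Bc ps ^ 2 * Real.exp (η * y) := by
  unfold RH
  rw [abs_mul, Real.abs_exp, mul_comm]
  apply mul_le_mul_of_nonneg_right _ (Real.exp_nonneg _)
  have h1 : (U qs ps y) ^ 2 ≤ Bc ps ^ 2 := by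
    rw [← sq_abs]; exact pow_le_pow_left₀ (abs_nonneg _) (abs_U_le qs ps y) 2
  have h2 : (UXr qs ps y) ^ 2 ≤ Bc ps ^ 2 := by
    rw [← sq_abs]; exact pow_le_pow_left₀ (abs_nonneg _) (abs_UXr_le qs ps y) 2
  rw [abs_of_nonneg (by positivity)]
  nlinarith


lemma continuous_U : Continuous (U qs ps) := by
  unfold U
  exact continuous_const.mul (continuous_finset_sum _ fun a _ =>
    continuous_const.mul (((continuous_id.sub continuous_const).abs.neg).rexp))

lemma measurable_UX : Measurable (UX qs ps) := by
  unfold UX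
  refine (Finset.measurable_sum _ fun a _ => ?_).const_mul _
  exact ((measurable_const.mul (measurable_sign.comp
    (measurable_id.sub measurable_const))).mul
    (((continuous_id.sub continuous_const).abs.neg).rexp.measurable))

lemma measurable_UXr : Measurable (UXr qs ps) := by
  unfold UXr
  refine (Finset.measurable_sum _ fun a _ => ?_).const_mul _
  refine (measurable_const.mul (Measurable.ite ?_ measurable_const measurable_const)).mul
    (((continuous_id.sub continuous_const).abs.neg).rexp.measurable)
  exact measurableSet_lt measurable_id measurable_const

lemma measurable_fC : Measurable (fC qs ps) := by
  unfold fC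
  exact ((continuous_U qs ps).measurable.pow_const 2).add
    ((measurable_const.mul ((measurable_UX qs ps).pow_const 2)))

lemma measurable_RH (η : ℝ) : Measurable (RH qs ps η) := by
  unfold RH
  exact ((continuous_const.mul continuous_id).rexp.measurable).mul
    (((continuous_U qs ps).measurable.pow_const 2).add
      (measurable_const.mul ((measurable_UXr qs ps).pow_const 2)))

/-- Away from the peaks, `UX` is continuous. -/
lemma continuousAt_UX {x : ℝ} (hx : ∀ a, x ≠ qs a) : ContinuousAt (UX qs ps) x := by
  set ε : Fin M → ℝ := fun b => Real.sign (x - qs b) with hε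
  have hε2 : ∀ b, ε b ^ 2 = 1 := fun b => sign_sq_eq_one (sub_ne_zero.mpr (hx b))
  have hevent : ∀ᶠ y in 𝓝 x, UX qs ps y = UXe qs ps ε y := by
    have h1 : ∀ᶠ y in 𝓝 x, ∀ b, Real.sign (y - qs b) = ε b := by
      rw [eventually_all]
      intro b
      rcases lt_or_gt_of_ne (hx b) with hb | hb
      · filter_upwards [Iio_mem_nhds hb] with y hy
        show Real.sign (y - qs b) = Real.sign (x - qs b)
        rw [Real.sign_of_neg (sub_neg.mpr hy), Real.sign_of_neg (sub_neg.mpr hb)]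
      · filter_upwards [Ioi_mem_nhds hb] with y hy
        show Real.sign (y - qs b) = Real.sign (x - qs b)
        rw [Real.sign_of_pos (sub_pos.mpr hy), Real.sign_of_pos (sub_pos.mpr hb)]
    filter_upwards [h1] with y hy
    unfold UX UXe
    congr 1
    refine Finset.sum_congr rfl fun b _ => ?_
    rw [← hy b, ← abs_eq_sign_mul]
  exact ((hasDerivAt_UXe qs ps hε2 x).continuousAt).congr (hevent.mono fun y hy => hy.symm)

lemma continuousAt_fC {x : ℝ} (hx : ∀ a, x ≠ qs a) : ContinuousAt (fC qs ps) x := by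
  unfold fC
  exact (((continuous_U qs ps).continuousAt.pow 2).add
    (((continuousAt_UX qs ps hx).pow 2).const_mul _))

noncomputable def Cb : ℝ := Bc ps ^ 2 + (1 / 2) * (Bc ps ^ 2 + (1 / 4) * ∑ a, (ps a) ^ 2)

lemma abs_Wf_le (y : ℝ) : |Wf qs ps y| ≤ Bc ps ^ 2 + (1 / 4) * ∑ a, (ps a) ^ 2 := by
  unfold Wf
  have ht : ∀ a ∈ Finset.univ, |(ps a) ^ 2 * (1 - (Real.sign (y - qs a)) ^ 2)
      * Real.exp (-(2 * |y - qs a|))| ≤ (ps a) ^ 2 := by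
    intro a _
    rw [abs_mul, abs_mul, abs_pow, sq_abs]
    have hs : |1 - (Real.sign (y - qs a)) ^ 2| ≤ 1 := by
      rcases Real.sign_apply_eq (y - qs a) with h | h | h <;> rw [h] <;> norm_num
    have he : |Real.exp (-(2 * |y - qs a|))| ≤ 1 := by
      rw [Real.abs_exp, ← Real.exp_zero]
      exact Real.exp_le_exp.mpr (neg_nonpos.mpr (by positivity))
    calc (ps a) ^ 2 * |1 - (Real.sign (y - qs a)) ^ 2| * |Real.exp (-(2 * |y - qs a|))|
        ≤ (ps a) ^ 2 * 1 * 1 := by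
          apply mul_le_mul (mul_le_mul le_rfl hs (abs_nonneg _) (by positivity)) he
            (abs_nonneg _) (by positivity)
      _ = (ps a) ^ 2 := by ring
  have h2 : |(UX qs ps y) ^ 2| ≤ Bc ps ^ 2 := by
    rw [abs_pow, sq_abs, ← sq_abs]
    exact pow_le_pow_left₀ (abs_nonneg _) (abs_UX_le qs ps y) 2
  calc |Wf qs ps y|
      ≤ |(UX qs ps y) ^ 2| + |(1 / 4) * ∑ a, (ps a) ^ 2 * (1 - (Real.sign (y - qs a)) ^ 2)
          * Real.exp (-(2 * |y - qs a|))| := abs_add_le _ _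
    _ ≤ Bc ps ^ 2 + (1 / 4) * ∑ a, (ps a) ^ 2 := by
        refine add_le_add h2 ?_
        rw [abs_mul, show |(1:ℝ)/4| = 1/4 by norm_num]
        exact mul_le_mul_of_nonneg_left
          ((Finset.abs_sum_le_sum_abs _ _).trans (Finset.sum_le_sum ht)) (by norm_num)

lemma abs_main_le {η : ℝ} (hη : |η| ≤ 1) (y : ℝ) :
    |U qs ps y * UX qs ps y - (η / 2) * Wf qs ps y| ≤ Cb ps := by
  have h1 : |U qs ps y * UX qs ps y| ≤ Bc ps ^ 2 := by
    rw [abs_mul, pow_two]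
    exact mul_le_mul (abs_U_le qs ps y) (abs_UX_le qs ps y) (abs_nonneg _) (Bc_nonneg ps)
  have h2 := abs_Wf_le qs ps y
  have h3 : |(η / 2) * Wf qs ps y| ≤ (1 / 2) * (Bc ps ^ 2 + (1 / 4) * ∑ a, (ps a) ^ 2) := by
    rw [abs_mul]
    have : |η / 2| ≤ 1 / 2 := by
      rw [abs_div, show |(2:ℝ)| = 2 by norm_num]
      linarith
    exact mul_le_mul this h2 (abs_nonneg _) (by norm_num)
  calc |U qs ps y * UX qs ps y - (η / 2) * Wf qs ps y|
      ≤ |U qs ps y * UX qs ps y| + |(η / 2) * Wf qs ps y| := abs_sub _ _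
    _ ≤ Cb ps := by unfold Cb; exact add_le_add h1 h3

/-- Decay of `Phi 1` at `-∞`. -/
lemma tendsto_Phi_one_atBot : Tendsto (Phi qs ps 1) atBot (𝓝 0) := by
  have hev : ∀ᶠ y in atBot, Phi qs ps 1 y
      = Real.exp (1 * y) * (U qs ps y * UX qs ps y - (1 / 2) * Wf qs ps y) := by
    have h1 : ∀ᶠ y in atBot, ∀ b : Fin M, y < qs b := by
      rw [eventually_all]
      exact fun b => eventually_lt_atBot (qs b)
    filter_upwards [h1] with y hy
    unfold Phi
    have : ∀ b ∈ Finset.univ, ((Real.sign (y - qs b) + 1) / 2) * Dl qs ps 1 b = 0 := by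
      intro b _
      rw [Real.sign_of_neg (sub_neg.mpr (hy b))]
      ring
    rw [Finset.sum_congr rfl this, Finset.sum_const_zero]
    ring_nf
  have hbound : ∀ᶠ y in atBot, ‖Phi qs ps 1 y‖ ≤ Cb ps * Real.exp y := by
    filter_upwards [hev] with y hy
    rw [hy, Real.norm_eq_abs, one_mul, abs_mul, Real.abs_exp, mul_comm (Real.exp y)]
    exact mul_le_mul_of_nonneg_right (abs_main_le qs ps (by norm_num) y) (Real.exp_nonneg y)
  have hg : Tendsto (fun y => Cb ps * Real.exp y) atBot (𝓝 0) := by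
    simpa using Real.tendsto_exp_atBot.const_mul (Cb ps)
  exact squeeze_zero_norm' hbound hg

/-- Decay of `Phi (-1)` at `+∞`. -/
lemma tendsto_Phi_neg_one_atTop : Tendsto (Phi qs ps (-1)) atTop (𝓝 0) := by
  have hev : ∀ᶠ y in atTop, Phi qs ps (-1) y
      = Real.exp (-1 * y) * (U qs ps y * UX qs ps y - (-1 / 2) * Wf qs ps y) := by
    have h1 : ∀ᶠ y in atTop, ∀ b : Fin M, qs b < y := by
      rw [eventually_all]
      exact fun b => eventually_gt_atTop (qs b)
    filter_upwards [h1] with y hy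
    unfold Phi
    have : ∀ b ∈ Finset.univ, ((Real.sign (y - qs b) + (-1)) / 2) * Dl qs ps (-1) b = 0 := by
      intro b _
      rw [Real.sign_of_pos (sub_pos.mpr (hy b))]
      ring
    rw [Finset.sum_congr rfl this, Finset.sum_const_zero]
    ring_nf
  have hbound : ∀ᶠ y in atTop, ‖Phi qs ps (-1) y‖ ≤ Cb ps * Real.exp (-y) := by
    filter_upwards [hev] with y hy
    rw [hy, Real.norm_eq_abs, abs_mul, Real.abs_exp, mul_comm (Real.exp (-1 * y))]
    rw [show (-1 : ℝ) * y = -y by ring]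
    exact mul_le_mul_of_nonneg_right (abs_main_le qs ps (by norm_num) y) (Real.exp_nonneg _)
  have hg : Tendsto (fun y => Cb ps * Real.exp (-y)) atTop (𝓝 0) := by
    simpa using Real.tendsto_exp_neg_atTop_nhds_zero.const_mul (Cb ps)
  exact squeeze_zero_norm' hbound hg


lemma integrableOn_RH_one_Iic (x : ℝ) : IntegrableOn (RH qs ps 1) (Iic x) := by
  refine Integrable.mono' (((integrableOn_exp_Iic x)).const_mul ((3 / 2) * Bc ps ^ 2))
    ((measurable_RH qs ps 1).aestronglyMeasurable) (ae_of_all _ fun y => ?_)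
  have := abs_RH_le qs ps (η := 1) y
  rw [one_mul] at this
  simpa [mul_comm] using this

lemma integrableOn_RH_neg_one_Ici (a : ℝ) : IntegrableOn (RH qs ps (-1)) (Ici a) := by
  have hexp : IntegrableOn (fun y => Real.exp (-y)) (Ici a) := by
    have h := exp_neg_integrableOn_Ioi (a - 1) (by norm_num : (0:ℝ) < 1)
    have h2 : IntegrableOn (fun y => Real.exp (-(1 : ℝ) * y)) (Ici a) :=
      h.mono_set (fun y hy => lt_of_lt_of_le (by linarith) (mem_Ici.mp hy))
    simpa using h2
  refine Integrable.mono' (hexp.const_mul ((3 / 2) * Bc ps ^ 2))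
    ((measurable_RH qs ps (-1)).aestronglyMeasurable) (ae_of_all _ fun y => ?_)
  have := abs_RH_le qs ps (η := -1) y
  rw [show (-1 : ℝ) * y = -y by ring] at this
  simpa [mul_comm] using this

lemma integrableOn_expMul_fC_Iic (x : ℝ) :
    IntegrableOn (fun y => Real.exp y * fC qs ps y) (Iic x) := by
  refine Integrable.mono' (((integrableOn_exp_Iic x)).const_mul ((3 / 2) * Bc ps ^ 2))
    (((Real.continuous_exp.measurable).mul (measurable_fC qs ps)).aestronglyMeasurable)
    (ae_of_all _ fun y => ?_)
  rw [Real.norm_eq_abs, abs_mul, Real.abs_exp, abs_of_nonneg (fC_nonneg qs ps y)]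
  calc Real.exp y * fC qs ps y ≤ Real.exp y * ((3 / 2) * Bc ps ^ 2) :=
        mul_le_mul_of_nonneg_left (fC_le qs ps y) (Real.exp_nonneg y)
    _ = (3 / 2) * Bc ps ^ 2 * Real.exp y := by ring

lemma integrableOn_expNegMul_fC_Ici (x : ℝ) :
    IntegrableOn (fun y => Real.exp (-y) * fC qs ps y) (Ici x) := by
  have hexp : IntegrableOn (fun y => Real.exp (-y)) (Ici x) := by
    have h := exp_neg_integrableOn_Ioi (x - 1) (by norm_num : (0:ℝ) < 1)
    have h2 : IntegrableOn (fun y => Real.exp (-(1 : ℝ) * y)) (Ici x) :=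
      h.mono_set (fun y hy => lt_of_lt_of_le (by linarith) (mem_Ici.mp hy))
    simpa using h2
  refine Integrable.mono' (hexp.const_mul ((3 / 2) * Bc ps ^ 2))
    (((Real.continuous_exp.comp continuous_neg).measurable.mul
      (measurable_fC qs ps)).aestronglyMeasurable)
    (ae_of_all _ fun y => ?_)
  rw [Real.norm_eq_abs, abs_mul, Real.abs_exp, abs_of_nonneg (fC_nonneg qs ps y)]
  calc Real.exp (-y) * fC qs ps y ≤ Real.exp (-y) * ((3 / 2) * Bc ps ^ 2) :=
        mul_le_mul_of_nonneg_left (fC_le qs ps y) (Real.exp_nonneg _)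
    _ = (3 / 2) * Bc ps ^ 2 * Real.exp (-y) := by ring

lemma UXr_eq_UX {y : ℝ} (hy : ∀ a, y ≠ qs a) : UXr qs ps y = UX qs ps y := by
  unfold UXr UX
  congr 1
  refine Finset.sum_congr rfl fun a _ => ?_
  congr 2
  by_cases hb : y < qs a
  · rw [if_pos hb, Real.sign_of_neg (sub_neg.mpr hb)]
  · push_neg at hb
    rw [if_neg (not_lt.mpr hb),
      Real.sign_of_pos (sub_pos.mpr (lt_of_le_of_ne hb (Ne.symm (hy a))))]

lemma RH_one_ae_eq : RH qs ps 1 =ᵐ[volume] fun y => Real.exp y * fC qs ps y := by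
  have hS : volume (Set.range qs) = 0 := (Set.finite_range qs).measure_zero volume
  rw [Filter.EventuallyEq, ae_iff]
  refine measure_mono_null (fun y hy => ?_) hS
  simp only [mem_setOf_eq] at hy
  by_contra hmem
  apply hy
  have hne : ∀ a, y ≠ qs a := fun a h => hmem ⟨a, h.symm⟩
  unfold RH fC
  rw [UXr_eq_UX qs ps hne, one_mul]

lemma RH_neg_one_ae_eq : RH qs ps (-1) =ᵐ[volume] fun y => Real.exp (-y) * fC qs ps y := by
  have hS : volume (Set.range qs) = 0 := (Set.finite_range qs).measure_zero volume
  rw [Filter.EventuallyEq, ae_iff]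
  refine measure_mono_null (fun y hy => ?_) hS
  simp only [mem_setOf_eq] at hy
  by_contra hmem
  apply hy
  have hne : ∀ a, y ≠ qs a := fun a h => hmem ⟨a, h.symm⟩
  unfold RH fC
  rw [UXr_eq_UX qs ps hne, show (-1 : ℝ) * y = -y by ring]

lemma intervalIntegral_RH_one (hdist : ∀ a b : Fin M, a ≠ b → qs a ≠ qs b) {a x : ℝ}
    (hax : a ≤ x) : ∫ y in a..x, RH qs ps 1 y = Phi qs ps 1 x - Phi qs ps 1 a := by
  refine intervalIntegral.integral_eq_sub_of_hasDeriv_right_of_le hax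
    (fun y _ => (continuousAt_Phi qs ps hdist (by norm_num) y).continuousWithinAt)
    (fun y _ => hasDerivWithinAt_Phi qs ps hdist (by norm_num) y) ?_
  refine ((integrableOn_RH_one_Iic qs ps x).mono_set ?_).intervalIntegrable
  rw [Set.uIcc_of_le hax]
  exact Icc_subset_Iic_self

lemma intervalIntegral_RH_neg_one (hdist : ∀ a b : Fin M, a ≠ b → qs a ≠ qs b) {x b : ℝ}
    (hxb : x ≤ b) : ∫ y in x..b, RH qs ps (-1) y = Phi qs ps (-1) b - Phi qs ps (-1) x := by
  refine intervalIntegral.integral_eq_sub_of_hasDeriv_right_of_le hxb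
    (fun y _ => (continuousAt_Phi qs ps hdist (by norm_num) y).continuousWithinAt)
    (fun y _ => hasDerivWithinAt_Phi qs ps hdist (by norm_num) y) ?_
  refine ((integrableOn_RH_neg_one_Ici qs ps x).mono_set ?_).intervalIntegrable
  rw [Set.uIcc_of_le hxb]
  exact Icc_subset_Ici_self

/-- `A(x) = Phi 1 x`. -/
lemma integral_Iic_eq_Phi (hdist : ∀ a b : Fin M, a ≠ b → qs a ≠ qs b) (x : ℝ) :
    ∫ y in Iic x, Real.exp y * fC qs ps y = Phi qs ps 1 x := by
  have h1 := intervalIntegral_tendsto_integral_Iic x (integrableOn_expMul_fC_Iic qs ps x)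
    (tendsto_id (α := ℝ) (x := atBot))
  have h2 : ∀ᶠ a in atBot, (∫ y in a..x, Real.exp y * fC qs ps y)
      = Phi qs ps 1 x - Phi qs ps 1 a := by
    filter_upwards [eventually_le_atBot x] with a ha
    rw [← intervalIntegral_RH_one qs ps hdist ha]
    exact intervalIntegral.integral_congr_ae
      ((RH_one_ae_eq qs ps).symm.mono fun y hy _ => hy)
  have h3 : Tendsto (fun a => Phi qs ps 1 x - Phi qs ps 1 a) atBot (𝓝 (Phi qs ps 1 x)) := by
    simpa using tendsto_const_nhds.sub (tendsto_Phi_one_atBot qs ps)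
  exact tendsto_nhds_unique (h1.congr' h2) h3

/-- `B(x) = -Phi (-1) x`. -/
lemma integral_Ioi_eq_Phi (hdist : ∀ a b : Fin M, a ≠ b → qs a ≠ qs b) (x : ℝ) :
    ∫ y in Ioi x, Real.exp (-y) * fC qs ps y = -Phi qs ps (-1) x := by
  have h1 := intervalIntegral_tendsto_integral_Ioi x
    ((integrableOn_expNegMul_fC_Ici qs ps x).mono_set Ioi_subset_Ici_self)
    (tendsto_id (α := ℝ) (x := atTop))
  have h2 : ∀ᶠ b in atTop, (∫ y in x..b, Real.exp (-y) * fC qs ps y)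
      = Phi qs ps (-1) b - Phi qs ps (-1) x := by
    filter_upwards [eventually_ge_atTop x] with b hb
    rw [← intervalIntegral_RH_neg_one qs ps hdist hb]
    exact intervalIntegral.integral_congr_ae
      ((RH_neg_one_ae_eq qs ps).symm.mono fun y hy _ => hy)
  have h3 : Tendsto (fun b => Phi qs ps (-1) b - Phi qs ps (-1) x) atTop
      (𝓝 (-Phi qs ps (-1) x)) := by
    simpa using (tendsto_Phi_neg_one_atTop qs ps).sub
      (tendsto_const_nhds (x := Phi qs ps (-1) x))
  exact tendsto_nhds_unique (h1.congr' h2) h3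


/-- Weighted bound constant with exponential decay. -/
noncomputable def Bd : ℝ := (1 / 2) * ∑ a, |ps a| * Real.exp |qs a|

lemma Bd_nonneg : 0 ≤ Bd qs ps := by
  unfold Bd
  have : ∀ a ∈ Finset.univ, (0:ℝ) ≤ |ps a| * Real.exp |qs a| := fun a _ => by positivity
  positivity

lemma exp_negAbs_le (q y : ℝ) :
    Real.exp (-|y - q|) ≤ Real.exp |q| * Real.exp (-|y|) := by
  rw [← Real.exp_add]
  refine Real.exp_le_exp.mpr ?_
  have := abs_sub_abs_le_abs_sub y q
  linarith

lemma abs_term_le' {c : ℝ} (hc : |c| ≤ 1) (a : Fin M) (y : ℝ) :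
    |ps a * c * Real.exp (-|y - qs a|)| ≤ |ps a| * Real.exp |qs a| * Real.exp (-|y|) := by
  rw [abs_mul, abs_mul, Real.abs_exp]
  calc |ps a| * |c| * Real.exp (-|y - qs a|)
      ≤ |ps a| * 1 * (Real.exp |qs a| * Real.exp (-|y|)) := by
        apply mul_le_mul (mul_le_mul le_rfl hc (abs_nonneg c) (abs_nonneg _))
          (exp_negAbs_le (qs a) y) (Real.exp_nonneg _) (by positivity)
    _ = |ps a| * Real.exp |qs a| * Real.exp (-|y|) := by ring

lemma half_sum_bound' {c : ℝ} (hc : |c| = 1 / 2) (g : Fin M → ℝ) (y : ℝ)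
    (h : ∀ a, |g a| ≤ |ps a| * Real.exp |qs a| * Real.exp (-|y|)) :
    |c * ∑ a, g a| ≤ Bd qs ps * Real.exp (-|y|) := by
  unfold Bd
  rw [abs_mul, hc]
  have h1 : |∑ a, g a| ≤ ∑ a, |ps a| * Real.exp |qs a| * Real.exp (-|y|) :=
    (Finset.abs_sum_le_sum_abs _ _).trans (Finset.sum_le_sum fun a _ => h a)
  calc (1:ℝ)/2 * |∑ a, g a|
      ≤ 1/2 * ∑ a, |ps a| * Real.exp |qs a| * Real.exp (-|y|) :=
        mul_le_mul_of_nonneg_left h1 (by norm_num)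
    _ = (1/2) * ∑ a, |ps a| * Real.exp |qs a| * Real.exp (-|y|) := rfl
    _ = 1/2 * (∑ a, |ps a| * Real.exp |qs a|) * Real.exp (-|y|) := by
        rw [← Finset.sum_mul]; ring

lemma abs_U_le' (y : ℝ) : |U qs ps y| ≤ Bd qs ps * Real.exp (-|y|) := by
  unfold U
  refine half_sum_bound' qs ps (by norm_num) _ y fun a => ?_
  have := abs_term_le' qs ps (c := 1) (by norm_num) a y
  simpa using this

lemma abs_UX_le' (y : ℝ) : |UX qs ps y| ≤ Bd qs ps * Real.exp (-|y|) := by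
  unfold UX
  exact half_sum_bound' qs ps (by norm_num) _ y fun a =>
    abs_term_le' qs ps (abs_sign_le_one _) a y

lemma fC_le' (y : ℝ) : fC qs ps y ≤ (3 / 2) * Bd qs ps ^ 2 * Real.exp (-(2 * |y|)) := by
  have h1 : (U qs ps y) ^ 2 ≤ (Bd qs ps * Real.exp (-|y|)) ^ 2 := by
    rw [← sq_abs]
    exact pow_le_pow_left₀ (abs_nonneg _) (abs_U_le' qs ps y) 2
  have h2 : (UX qs ps y) ^ 2 ≤ (Bd qs ps * Real.exp (-|y|)) ^ 2 := by
    rw [← sq_abs]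
    exact pow_le_pow_left₀ (abs_nonneg _) (abs_UX_le' qs ps y) 2
  have h3 : (Real.exp (-|y|)) ^ 2 = Real.exp (-(2 * |y|)) := by
    rw [← Real.exp_nat_mul]
    norm_num
  unfold fC
  calc (U qs ps y) ^ 2 + (1/2) * (UX qs ps y) ^ 2
      ≤ (3/2) * (Bd qs ps * Real.exp (-|y|)) ^ 2 := by nlinarith
    _ = (3/2) * Bd qs ps ^ 2 * Real.exp (-(2 * |y|)) := by rw [mul_pow, h3]; ring

lemma integrableOn_expNegMul_fC_Iic (x : ℝ) :
    IntegrableOn (fun y => Real.exp (-y) * fC qs ps y) (Iic x) := by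
  refine Integrable.mono' (((integrableOn_exp_Iic x)).const_mul ((3 / 2) * Bd qs ps ^ 2))
    (((Real.continuous_exp.comp continuous_neg).measurable.mul
      (measurable_fC qs ps)).aestronglyMeasurable)
    (ae_of_all _ fun y => ?_)
  rw [Real.norm_eq_abs, abs_mul, Real.abs_exp, abs_of_nonneg (fC_nonneg qs ps y)]
  have hkey : Real.exp (-y) * Real.exp (-(2 * |y|)) ≤ Real.exp y := by
    rw [← Real.exp_add]
    refine Real.exp_le_exp.mpr ?_
    have := neg_abs_le y
    have := abs_nonneg y
    rcases abs_cases y with ⟨h, _⟩ | ⟨h, _⟩ <;> linarith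
  calc Real.exp (-y) * fC qs ps y
      ≤ Real.exp (-y) * ((3/2) * Bd qs ps ^ 2 * Real.exp (-(2 * |y|))) :=
        mul_le_mul_of_nonneg_left (fC_le' qs ps y) (Real.exp_nonneg _)
    _ = (3/2) * Bd qs ps ^ 2 * (Real.exp (-y) * Real.exp (-(2 * |y|))) := by ring
    _ ≤ (3/2) * Bd qs ps ^ 2 * Real.exp y :=
        mul_le_mul_of_nonneg_left hkey (by positivity)



lemma hasDerivAt_time (x : ℝ) (q p : Fin M → ℝ → ℝ) (t : ℝ)
    (hq : ∀ a, DifferentiableAt ℝ (q a) t) (hp : ∀ a, DifferentiableAt ℝ (p a) t)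
    (hx : ∀ a, x ≠ q a t) :
    HasDerivAt (fun t' => (1 / 2) * ∑ a, p a t' * Real.exp (-|x - q a t'|))
      ((1 / 2) * ∑ a, (deriv (p a) t * Real.exp (-|x - q a t|)
        + p a t * (Real.sign (x - q a t) * deriv (q a) t) * Real.exp (-|x - q a t|))) t := by
  refine HasDerivAt.const_mul _ (HasDerivAt.fun_sum fun a _ => ?_)
  set σ : ℝ := Real.sign (x - q a t) with hσ
  have hinner : HasDerivAt (fun t' => -(σ * (x - q a t'))) (σ * deriv (q a) t) t := by
    have h1 := (((hq a).hasDerivAt.const_sub x).const_mul σ).fun_neg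
    simpa using h1
  have hexp := hinner.exp
  have hG := (hp a).hasDerivAt.fun_mul hexp
  have habs : ∀ᶠ t' in 𝓝 t, |x - q a t'| = σ * (x - q a t') := by
    rcases lt_or_gt_of_ne (hx a) with hlt | hgt
    · have hσv : σ = -1 := Real.sign_of_neg (sub_neg.mpr hlt)
      have hev : ∀ᶠ t' in 𝓝 t, q a t' ∈ Ioi x :=
        (hq a).continuousAt.preimage_mem_nhds (Ioi_mem_nhds hlt)
      filter_upwards [hev] with t' ht'
      rw [abs_of_neg (sub_neg.mpr (mem_Ioi.mp ht')), hσv]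
      ring
    · have hσv : σ = 1 := Real.sign_of_pos (sub_pos.mpr hgt)
      have hev : ∀ᶠ t' in 𝓝 t, q a t' ∈ Iio x :=
        (hq a).continuousAt.preimage_mem_nhds (Iio_mem_nhds hgt)
      filter_upwards [hev] with t' ht'
      rw [abs_of_pos (sub_pos.mpr (mem_Iio.mp ht')), hσv]
      ring
  have heq : (fun t' => p a t' * Real.exp (-|x - q a t'|))
      =ᶠ[𝓝 t] (fun t' => p a t' * Real.exp (-(σ * (x - q a t')))) := by
    filter_upwards [habs] with t' ht'
    rw [ht']
  have habs0 : |x - q a t| = σ * (x - q a t) := habs.self_of_nhds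
  have hfinal := hG.congr_of_eventuallyEq heq
  convert hfinal using 1
  rw [← habs0]
  ring




variable {M : ℕ} (qs ps : Fin M → ℝ)

lemma Kconv_fC_eq (x' : ℝ) :
    Kconv (fC qs ps) x'
      = (1 / 2) * Real.exp (-x') * (∫ y in Iic x', Real.exp y * fC qs ps y)
        + (1 / 2) * Real.exp x' * (∫ y in Ioi x', Real.exp (-y) * fC qs ps y) := by
  unfold Kconv
  have heq1 : EqOn (fun y => ((1 / 2) * Real.exp (-x')) * (Real.exp y * fC qs ps y))
      (fun y => (1 / 2) * Real.exp (-|x' - y|) * fC qs ps y) (Iic x') := by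
    intro y hy
    simp only
    rw [abs_of_nonneg (sub_nonneg.mpr (mem_Iic.mp hy)),
      show -(x' - y) = -x' + y by ring, Real.exp_add]
    ring
  have heq2 : EqOn (fun y => ((1 / 2) * Real.exp x') * (Real.exp (-y) * fC qs ps y))
      (fun y => (1 / 2) * Real.exp (-|x' - y|) * fC qs ps y) (Ioi x') := by
    intro y hy
    simp only
    rw [abs_of_nonpos (sub_nonpos.mpr (le_of_lt (mem_Ioi.mp hy))),
      show - -(x' - y) = x' + -y by ring, Real.exp_add]
    ring
  have hIic0 : IntegrableOn (fun y => ((1 / 2) * Real.exp (-x')) * (Real.exp y * fC qs ps y))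
      (Iic x') := (integrableOn_expMul_fC_Iic qs ps x').const_mul ((1 / 2) * Real.exp (-x'))
  have hIic : IntegrableOn (fun y => (1 / 2) * Real.exp (-|x' - y|) * fC qs ps y) (Iic x') :=
    hIic0.congr_fun heq1 measurableSet_Iic
  have hIoi0 : IntegrableOn (fun y => ((1 / 2) * Real.exp x') * (Real.exp (-y) * fC qs ps y))
      (Ioi x') := ((integrableOn_expNegMul_fC_Ici qs ps x').mono_set
      Ioi_subset_Ici_self).const_mul ((1 / 2) * Real.exp x')
  have hIoi : IntegrableOn (fun y => (1 / 2) * Real.exp (-|x' - y|) * fC qs ps y) (Ioi x') :=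
    hIoi0.congr_fun heq2 measurableSet_Ioi
  rw [← intervalIntegral.integral_Iic_add_Ioi hIic hIoi]
  congr 1
  · rw [← setIntegral_congr_fun measurableSet_Iic heq1, integral_const_mul]
  · rw [← setIntegral_congr_fun measurableSet_Ioi heq2, integral_const_mul]

lemma hasDerivAt_Kconv (hdist : ∀ a b : Fin M, a ≠ b → qs a ≠ qs b) {x : ℝ}
    (hx : ∀ a, x ≠ qs a) :
    HasDerivAt (Kconv (fC qs ps))
      ((1 / 2) * (Real.exp x * (∫ y in Ioi x, Real.exp (-y) * fC qs ps y)
        - Real.exp (-x) * (∫ y in Iic x, Real.exp y * fC qs ps y))) x := by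
  set g1 : ℝ → ℝ := fun y => Real.exp y * fC qs ps y with hg1
  set g2 : ℝ → ℝ := fun y => Real.exp (-y) * fC qs ps y with hg2
  set A : ℝ := ∫ y in Iic x, g1 y with hA
  set B : ℝ := ∫ y in Ioi x, g2 y with hB
  have hfun : Kconv (fC qs ps) = fun x' =>
      (1 / 2) * (Real.exp (-x') * (A + ∫ y in x..x', g1 y))
        + (1 / 2) * (Real.exp x' * (B - ∫ y in x..x', g2 y)) := by
    funext x'
    rw [Kconv_fC_eq]
    have e1 : (∫ y in Iic x', g1 y) = A + ∫ y in x..x', g1 y := by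
      have := intervalIntegral.integral_Iic_sub_Iic
        (integrableOn_expMul_fC_Iic qs ps x) (integrableOn_expMul_fC_Iic qs ps x')
      rw [hA]
      linarith
    have e2 : (∫ y in Ioi x', g2 y) = B - ∫ y in x..x', g2 y := by
      have h1 := intervalIntegral.integral_Iic_add_Ioi (μ := volume)
        (integrableOn_expNegMul_fC_Iic qs ps x)
        ((integrableOn_expNegMul_fC_Ici qs ps x).mono_set Ioi_subset_Ici_self)
      have h2 := intervalIntegral.integral_Iic_add_Ioi (μ := volume)
        (integrableOn_expNegMul_fC_Iic qs ps x')
        ((integrableOn_expNegMul_fC_Ici qs ps x').mono_set Ioi_subset_Ici_self)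
      have h3 := intervalIntegral.integral_Iic_sub_Iic
        (integrableOn_expNegMul_fC_Iic qs ps x) (integrableOn_expNegMul_fC_Iic qs ps x')
      rw [hB]
      linarith
    rw [e1, e2]
    ring
  rw [hfun]
  have hsub : Set.uIcc x x ⊆ Iic x := by
    rw [Set.uIcc_self]
    exact singleton_subset_iff.mpr (mem_Iic.mpr le_rfl)
  have hsub2 : Set.uIcc x x ⊆ Ici x := by
    rw [Set.uIcc_self]
    exact singleton_subset_iff.mpr (mem_Ici.mpr le_rfl)
  have hcont1 : ContinuousAt g1 x :=
    (Real.continuous_exp.continuousAt).mul (continuousAt_fC qs ps hx)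
  have hcont2 : ContinuousAt g2 x :=
    ((Real.continuous_exp.comp continuous_neg).continuousAt).mul (continuousAt_fC qs ps hx)
  have hmeas1 : StronglyMeasurableAtFilter g1 (𝓝 x) volume :=
    ((Real.continuous_exp.measurable.mul
      (measurable_fC qs ps)).aestronglyMeasurable).stronglyMeasurableAtFilter
  have hmeas2 : StronglyMeasurableAtFilter g2 (𝓝 x) volume :=
    (((Real.continuous_exp.comp continuous_neg).measurable.mul
      (measurable_fC qs ps)).aestronglyMeasurable).stronglyMeasurableAtFilter
  have hD1 : HasDerivAt (fun x' => ∫ y in x..x', g1 y) (g1 x) x :=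
    intervalIntegral.integral_hasDerivAt_right
      (((integrableOn_expMul_fC_Iic qs ps x).mono_set hsub).intervalIntegrable) hmeas1 hcont1
  have hD2 : HasDerivAt (fun x' => ∫ y in x..x', g2 y) (g2 x) x :=
    intervalIntegral.integral_hasDerivAt_right
      (((integrableOn_expNegMul_fC_Ici qs ps x).mono_set hsub2).intervalIntegrable) hmeas2 hcont2
  have hE1 : HasDerivAt (fun x' : ℝ => Real.exp (-x')) (Real.exp (-x) * (-1)) x :=
    (hasDerivAt_neg x).exp
  have hE2 : HasDerivAt Real.exp (Real.exp x) x := Real.hasDerivAt_exp x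
  have hT1 := (hE1.fun_mul (hD1.const_add A)).const_mul ((1 : ℝ) / 2)
  have hT2 := (hE2.fun_mul ((hD2.const_sub B))).const_mul ((1 : ℝ) / 2)
  have hsum := hT1.fun_add hT2
  have hone : Real.exp (-x) * Real.exp x = 1 := by
    rw [← Real.exp_add]
    simp
  refine hsum.congr_deriv ?_
  rw [intervalIntegral.integral_same, intervalIntegral.integral_same]
  simp only [hg1, hg2]
  ring_nf

lemma Phi_combine (x : ℝ) :
    Real.exp x * Phi qs ps (-1) x + Real.exp (-x) * Phi qs ps 1 x
      = 2 * (U qs ps x * UX qs ps x)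
        - ∑ a, (Real.exp (-x) * (((Real.sign (x - qs a) + 1) / 2) * Dl qs ps 1 a)
            + Real.exp x * (((Real.sign (x - qs a) + (-1)) / 2) * Dl qs ps (-1) a)) := by
  unfold Phi
  rw [Finset.sum_add_distrib, ← Finset.mul_sum, ← Finset.mul_sum]
  have e1 : Real.exp x * Real.exp (-1 * x) = 1 := by
    rw [← Real.exp_add]; norm_num
  have e2 : Real.exp (-x) * Real.exp (1 * x) = 1 := by
    rw [← Real.exp_add]; norm_num
  linear_combination (U qs ps x * UX qs ps x + (1 / 2) * Wf qs ps x) * e1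
    + (U qs ps x * UX qs ps x - (1 / 2) * Wf qs ps x) * e2

lemma deriv_Kconv (hdist : ∀ a b : Fin M, a ≠ b → qs a ≠ qs b) {x : ℝ}
    (hx : ∀ a, x ≠ qs a) :
    deriv (Kconv (fC qs ps)) x
      = -(1 / 2) * (Real.exp x * Phi qs ps (-1) x + Real.exp (-x) * Phi qs ps 1 x) := by
  rw [(hasDerivAt_Kconv qs ps hdist hx).deriv, integral_Iic_eq_Phi qs ps hdist x,
    integral_Ioi_eq_Phi qs ps hdist x]
  ring


end PeakonAux

/-- If the positions `q_a` and momenta `p_a` of `M` peakons satisfy the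
canonical peakon Hamiltonian equations, then the peakon wave train
`u(x,t) = ½ Σ_a p_a(t) e^{-|x - q_a(t)|}` satisfies the advective form of the
Camassa–Holm equation `u_t + u u_x = -∂ₓ(K∗(u² + ½ u_x²))` away from the
peaks, where `u_x` denotes the a.e.-defined spatial derivative. -/
theorem peakon_train_solves_camassaHolm (M : ℕ) (hM : 1 ≤ M) (T : ℝ) (hT : 0 < T)
    (q p : Fin M → ℝ → ℝ)
    -- q, p are C¹ on [0,T)
    (hq_diff : ∀ a, ∀ t ∈ Set.Ico (0 : ℝ) T, DifferentiableAt ℝ (q a) t)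
    (hp_diff : ∀ a, ∀ t ∈ Set.Ico (0 : ℝ) T, DifferentiableAt ℝ (p a) t)
    (hq_cont : ∀ a, ContinuousOn (deriv (q a)) (Set.Ico (0 : ℝ) T))
    (hp_cont : ∀ a, ContinuousOn (deriv (p a)) (Set.Ico (0 : ℝ) T))
    -- the positions are pairwise distinct
    (hq_ne : ∀ t ∈ Set.Ico (0 : ℝ) T, ∀ a b : Fin M, a ≠ b → q a t ≠ q b t)
    -- canonical Hamiltonian equations for the peakon trajectories
    (hq_eqn : ∀ a, ∀ t ∈ Set.Ico (0 : ℝ) T,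
      deriv (q a) t = (1 / 2) * ∑ b, p b t * Real.exp (-|q a t - q b t|))
    -- canonical Hamiltonian equations for the peakon momenta (with sgn 0 = 0)
    (hp_eqn : ∀ a, ∀ t ∈ Set.Ico (0 : ℝ) T,
      deriv (p a) t
        = (1 / 2) * p a t * ∑ b, p b t * Real.sign (q a t - q b t)
            * Real.exp (-|q a t - q b t|)) :
    let u : ℝ → ℝ → ℝ := fun x t => (1 / 2) * ∑ a, p a t * Real.exp (-|x - q a t|)
    let ux : ℝ → ℝ → ℝ := fun y t =>
      -(1 / 2) * ∑ a, p a t * Real.sign (y - q a t) * Real.exp (-|y - q a t|)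
    ∀ t ∈ Set.Ico (0 : ℝ) T, ∀ x : ℝ, (∀ a : Fin M, x ≠ q a t) →
      deriv (fun t' => u x t') t + u x t * ux x t
        = - deriv (Kconv (fun y => (u y t) ^ 2 + (1 / 2) * (ux y t) ^ 2)) x := by
  intro u ux t ht x hx
  have hdist : ∀ a b : Fin M, a ≠ b → (fun c => q c t) a ≠ (fun c => q c t) b :=
    hq_ne t ht
  have hxq : ∀ a : Fin M, x ≠ (fun c => q c t) a := hx
  have hKd : deriv (Kconv (fun y => (u y t) ^ 2 + (1 / 2) * (ux y t) ^ 2)) x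
      = -(1 / 2) * (Real.exp x * PeakonAux.Phi (fun c => q c t) (fun c => p c t) (-1) x
          + Real.exp (-x) * PeakonAux.Phi (fun c => q c t) (fun c => p c t) 1 x) :=
    PeakonAux.deriv_Kconv (fun c => q c t) (fun c => p c t) hdist hxq
  have hT' := PeakonAux.hasDerivAt_time (M := M) x q p t (fun a => hq_diff a t ht)
    (fun a => hp_diff a t ht) hx
  have hTd : deriv (fun t' => u x t') t
      = (1 / 2) * ∑ a, (deriv (p a) t * Real.exp (-|x - q a t|)
        + p a t * (Real.sign (x - q a t) * deriv (q a) t) * Real.exp (-|x - q a t|)) :=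
    hT'.deriv
  rw [hTd, hKd, PeakonAux.Phi_combine]
  have huU : u x t = PeakonAux.U (fun c => q c t) (fun c => p c t) x := rfl
  have huUX : ux x t = PeakonAux.UX (fun c => q c t) (fun c => p c t) x := rfl
  rw [huU, huUX]
  have hterm : ∀ a ∈ Finset.univ, (deriv (p a) t * Real.exp (-|x - q a t|)
      + p a t * (Real.sign (x - q a t) * deriv (q a) t) * Real.exp (-|x - q a t|))
      = -(Real.exp (-x) * (((Real.sign (x - q a t) + 1) / 2)
            * PeakonAux.Dl (fun c => q c t) (fun c => p c t) 1 a)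
        + Real.exp x * (((Real.sign (x - q a t) + (-1)) / 2)
            * PeakonAux.Dl (fun c => q c t) (fun c => p c t) (-1) a)) := by
    intro a _
    have hdq : deriv (q a) t
        = PeakonAux.U (fun c => q c t) (fun c => p c t) (q a t) := hq_eqn a t ht
    have hdp : deriv (p a) t
        = -(p a t) * PeakonAux.UX (fun c => q c t) (fun c => p c t) (q a t) := by
      rw [hp_eqn a t ht]
      simp only [PeakonAux.UX]
      ring
    rw [hdp, hdq]
    simp only [PeakonAux.Dl]
    rcases lt_or_gt_of_ne (hx a) with hlt | hgt
    · rw [Real.sign_of_neg (sub_neg.mpr hlt), abs_of_neg (sub_neg.mpr hlt)]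
      have hE : Real.exp (-1 * q a t) * Real.exp x = Real.exp (-(-(x - q a t))) := by
        rw [← Real.exp_add]; congr 1; ring
      linear_combination ((p a t) * (PeakonAux.U (fun c => q c t) (fun c => p c t) (q a t)
        + PeakonAux.UX (fun c => q c t) (fun c => p c t) (q a t))) * hE
    · rw [Real.sign_of_pos (sub_pos.mpr hgt), abs_of_pos (sub_pos.mpr hgt)]
      have hE : Real.exp (1 * q a t) * Real.exp (-x) = Real.exp (-(x - q a t)) := by
        rw [← Real.exp_add]; congr 1; ring
      linear_combination (-(p a t) * (PeakonAux.U (fun c => q c t) (fun c => p c t) (q a t)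
        - PeakonAux.UX (fun c => q c t) (fun c => p c t) (q a t))) * hE
  have hsum2 : (∑ a, (deriv (p a) t * Real.exp (-|x - q a t|)
      + p a t * (Real.sign (x - q a t) * deriv (q a) t) * Real.exp (-|x - q a t|)))
      = -∑ a, (Real.exp (-x) * (((Real.sign (x - q a t) + 1) / 2)
            * PeakonAux.Dl (fun c => q c t) (fun c => p c t) 1 a)
        + Real.exp x * (((Real.sign (x - q a t) + (-1)) / 2)
            * PeakonAux.Dl (fun c => q c t) (fun c => p c t) (-1) a)) := by
    rw [← Finset.sum_neg_distrib]
    exact Finset.sum_congr rfl hterm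
  linear_combination (1 / 2 : ℝ) * hsum2
end
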